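/- arXiv:1606.02081 — 8 statements merged into one kernel-verified Lean document; each statement's English description precedes it below -/
import Mathlib

section
/- A non-decreasing sequence (d_1, ..., d_n) of non-negative real numbers is the score sequence of some self-converse generalised tournament on n vertices if and only if it satisfies condition I (for every subset J of {1,...,n}, the sum of d_i over i in J is at least binom(|J|,2), with equality when J = {1,...,n}) and condition II (d_i + d_{n+1-i} = n - 1 for all i = 1,...,n). -/
/-- A generalised tournament on vertex set `Fin n`: a `[0,1]`-valued weight function with
`α i j + α j i = 1` for `i ≠ j` and `α i i = 0`. -/
def IsGenTournament {n : ℕ} (α : Fin n → Fin n → ℝ) : Prop :=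
  (∀ i j, 0 ≤ α i j) ∧ (∀ i j, α i j ≤ 1) ∧
  (∀ i j, i ≠ j → α i j + α j i = 1) ∧ (∀ i, α i i = 0)

/-- A generalised tournament is self-converse if some bijection of the vertex set is an
isomorphism onto its converse, i.e. `α i j = 1 - α (ρ i) (ρ j)` off the diagonal. -/
def IsSelfConverse {n : ℕ} (α : Fin n → Fin n → ℝ) : Prop :=
  ∃ ρ : Equiv.Perm (Fin n), ∀ i j, i ≠ j → α i j = 1 - α (ρ i) (ρ j)

/-- Condition I: every subset `J` of the indices has score sum at least `binom |J| 2`,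
with equality for the full set. -/
def CondI {n : ℕ} (d : Fin n → ℝ) : Prop :=
  (∀ J : Finset (Fin n), (J.card.choose 2 : ℝ) ≤ ∑ i ∈ J, d i) ∧
  ∑ i, d i = (n.choose 2 : ℝ)

/-- Condition II: `d i + d (n+1-i) = n - 1` for all `i` (here `Fin.rev` plays the role of
`i ↦ n+1-i`). -/
def CondII {n : ℕ} (d : Fin n → ℝ) : Prop :=
  ∀ i : Fin n, d i + d i.rev = (n : ℝ) - 1


private lemma choose_succ_two_cast (k : ℕ) : (((k+1).choose 2 : ℕ) : ℝ) = (k.choose 2 : ℝ) + k := by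
  rw [Nat.choose_succ_succ k 1]
  push_cast [Nat.choose_one_right]
  ring

private lemma filter_lt_eq_map {N : ℕ} (k : ℕ) (h : k ≤ N) :
    Finset.univ.filter (fun i : Fin N => (i : ℕ) < k)
      = Finset.univ.map (Fin.castLEEmb h) := by
  ext i
  simp only [Finset.mem_filter, Finset.mem_univ, true_and, Finset.mem_map]
  constructor
  · intro hi
    exact ⟨⟨(i : ℕ), hi⟩, by ext; simp⟩
  · rintro ⟨a, rfl⟩
    simp

private lemma card_filter_lt {N : ℕ} (k : ℕ) (h : k ≤ N) :
    (Finset.univ.filter (fun i : Fin N => (i : ℕ) < k)).card = k := by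
  rw [filter_lt_eq_map k h]; simp

private lemma sum_prefix {N : ℕ} (f : Fin N → ℝ) (k : ℕ) (h : k ≤ N) :
    ∑ i : Fin k, f (Fin.castLE h i)
      = ∑ i ∈ Finset.univ.filter (fun i : Fin N => (i : ℕ) < k), f i := by
  rw [filter_lt_eq_map k h, Finset.sum_map]
  rfl

private lemma filter_lt_succ {N k : ℕ} (hk : k < N) :
    Finset.univ.filter (fun i : Fin N => (i : ℕ) < k + 1)
      = insert (⟨k, hk⟩ : Fin N) (Finset.univ.filter (fun i : Fin N => (i : ℕ) < k)) := by
  ext i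
  simp [Fin.ext_iff]
  omega

private lemma filter_lt_all {N : ℕ} :
    Finset.univ.filter (fun i : Fin N => (i : ℕ) < N) = Finset.univ := by
  ext i; simp [i.isLt]

private lemma clamp_sub_le {s t : ℝ} (h : s ≤ t) :
    min 1 (max 0 t) - min 1 (max 0 s) ≤ t - s := by
  simp only [min_def, max_def]
  split_ifs <;> linarith

private lemma min_le_add_clamp (c t : ℝ) : min c (t + 1) ≤ t + min 1 (max 0 (c - t)) := by
  simp only [min_def, max_def]
  split_ifs <;> linarith

private lemma mono_comp_eq {n : ℕ} (f : Fin n → ℝ) (σ : Equiv.Perm (Fin n))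
    (hf : Monotone f) (hfσ : Monotone (f ∘ σ)) : f ∘ σ = f := by
  have h1 := Tuple.comp_sort_eq_comp_iff_monotone.mpr hfσ
  rw [Tuple.sort_eq_refl_iff_monotone.mpr hf] at h1
  simpa using h1

private lemma lemW {N : ℕ} (d : Fin N → ℝ) (hmono : Monotone d)
    (hL : ∀ k : ℕ, k ≤ N → (k.choose 2 : ℝ) ≤
      ∑ i ∈ Finset.univ.filter (fun i : Fin N => (i : ℕ) < k), d i) :
    ∀ k : ℕ, k ≤ N → ∀ M : ℝ, (k : ℝ) ≤ M →
      (((k+1).choose 2 : ℕ) : ℝ) ≤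
        ∑ i ∈ Finset.univ.filter (fun i : Fin N => (i : ℕ) < k), min M (d i + 1) := by
  intro k
  induction k with
  | zero => intro _ M _; simp
  | succ k ihk =>
    intro hk M hM
    have hklt : k < N := hk
    have hM' : (k : ℝ) ≤ M := by push_cast at hM; linarith
    rcases le_total ((k : ℝ) + 1) (d ⟨k, hklt⟩ + 1) with h1 | h2
    · -- last term is big
      rw [filter_lt_succ hklt, Finset.sum_insert (by simp)]
      have hIH := ihk (le_of_lt hklt) M hM'
      have hbig : ((k : ℝ) + 1) ≤ min M (d ⟨k, hklt⟩ + 1) := by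
        apply le_min _ h1
        push_cast at hM; linarith
      have hch := choose_succ_two_cast (k+1)
      push_cast at hch hIH ⊢
      linarith
    · -- all mins are d i + 1
      have hall : ∀ i ∈ Finset.univ.filter (fun i : Fin N => (i : ℕ) < k + 1),
          min M (d i + 1) = d i + 1 := by
        intro i hi
        simp only [Finset.mem_filter, Finset.mem_univ, true_and] at hi
        have hle : d i ≤ d ⟨k, hklt⟩ := hmono (by simp [Fin.le_def]; omega)
        have := hM
        push_cast at this
        exact min_eq_right (by linarith)
      rw [Finset.sum_congr rfl hall, Finset.sum_add_distrib, Finset.sum_const,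
        card_filter_lt (k+1) hk, nsmul_eq_mul, mul_one]
      have hLk := hL (k+1) hk
      have hch := choose_succ_two_cast (k+1)
      push_cast at hch hLk ⊢
      linarith

private lemma exists_gt : ∀ (n : ℕ) (d : Fin n → ℝ), Monotone d →
    (∀ k : ℕ, k ≤ n → (k.choose 2 : ℝ) ≤
      ∑ i ∈ Finset.univ.filter (fun i : Fin n => (i : ℕ) < k), d i) →
    (∑ i, d i = (n.choose 2 : ℝ)) →
    ∃ α : Fin n → Fin n → ℝ, IsGenTournament α ∧ ∀ i, ∑ j, α i j = d i := by
  intro n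
  induction n with
  | zero =>
    intro d _ _ _
    exact ⟨fun _ _ => 0,
      ⟨fun i => i.elim0, fun i => i.elim0, fun i => i.elim0, fun i => i.elim0⟩,
      fun i => i.elim0⟩
  | succ m ih =>
    intro d hmono hL htot
    set D := d (Fin.last m) with hDdef
    have hmlt : ∀ (a b : Fin m), (a : ℕ) ≤ (b : ℕ) → d a.castSucc ≤ d b.castSucc := by
      intro a b hab
      exact hmono (Fin.castSucc_le_castSucc_iff.mpr hab)
    have hd0 : ∀ i, 0 ≤ d i := by
      intro i
      have h1 := hL 1 (by omega)
      have hset : Finset.univ.filter (fun i : Fin (m+1) => (i : ℕ) < 1) = {0} := by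
        ext j
        simp only [Finset.mem_filter, Finset.mem_univ, true_and, Finset.mem_singleton,
          Fin.ext_iff, Fin.val_zero]
        omega
      rw [hset, Finset.sum_singleton] at h1
      have h0 : (0 : ℝ) ≤ d 0 := by simpa using h1
      exact le_trans h0 (hmono (Fin.zero_le i))
    have hD0 : 0 ≤ D := hd0 _
    have hsum_split : ∑ i : Fin m, d i.castSucc + D = ((m+1).choose 2 : ℝ) := by
      rw [← htot, Fin.sum_univ_castSucc]
    have hcast_pref : ∀ (k : ℕ), k ≤ m →
        ∑ i ∈ Finset.univ.filter (fun i : Fin m => (i : ℕ) < k), d i.castSucc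
          = ∑ i ∈ Finset.univ.filter (fun i : Fin (m+1) => (i : ℕ) < k), d i := by
      intro k h
      rw [← sum_prefix (fun i : Fin m => d i.castSucc) k h, ← sum_prefix d k (by omega)]
      rfl
    have hpref_m : (m.choose 2 : ℝ) ≤ ∑ i : Fin m, d i.castSucc := by
      have h2 := hL m (by omega)
      rw [← hcast_pref m le_rfl, filter_lt_all] at h2
      exact h2
    have hchm := choose_succ_two_cast m
    have hDub : D ≤ (m : ℝ) := by linarith
    obtain ⟨c, -, hc⟩ :
        ∃ c ∈ Set.Icc (0 : ℝ) (D + 1),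
          (∑ j : Fin m, min 1 (max 0 (c - d j.castSucc))) = D := by
      have hcont : ContinuousOn (fun c : ℝ => ∑ j : Fin m, min 1 (max 0 (c - d j.castSucc)))
          (Set.Icc 0 (D+1)) := by
        apply Continuous.continuousOn
        apply continuous_finset_sum
        intro j _
        fun_prop
      have h0 : (∑ j : Fin m, min 1 (max 0 ((0:ℝ) - d j.castSucc))) = 0 := by
        apply Finset.sum_eq_zero
        intro j _
        have := hd0 j.castSucc
        rw [max_eq_left (by linarith), min_eq_right (by norm_num)]
      have h1 : (∑ j : Fin m, min 1 (max 0 (D + 1 - d j.castSucc))) = m := by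
        have hall : ∀ j ∈ (Finset.univ : Finset (Fin m)),
            min 1 (max 0 (D + 1 - d j.castSucc)) = 1 := by
          intro j _
          have hj : d j.castSucc ≤ D := hmono (Fin.le_last _)
          rw [max_eq_right (by linarith), min_eq_left (by linarith)]
        rw [Finset.sum_congr rfl hall, Finset.sum_const]
        simp
      have hmem : D ∈ Set.Icc
          ((fun c : ℝ => ∑ j : Fin m, min 1 (max 0 (c - d j.castSucc))) 0)
          ((fun c : ℝ => ∑ j : Fin m, min 1 (max 0 (c - d j.castSucc))) (D+1)) :=
        Set.mem_Icc.mpr ⟨h0.le.trans hD0, hDub.trans h1.ge⟩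
      exact intermediate_value_Icc (by linarith : (0:ℝ) ≤ D + 1) hcont hmem
    set x : Fin m → ℝ := fun j => min 1 (max 0 (c - d j.castSucc)) with hxdef
    have hxval : ∀ j, x j = min 1 (max 0 (c - d j.castSucc)) := fun _ => rfl
    have hx0 : ∀ j, 0 ≤ x j := fun j => le_min zero_le_one (le_max_left _ _)
    have hx1 : ∀ j, x j ≤ 1 := fun j => min_le_left _ _
    have hxsum : ∑ j, x j = D := hc
    set d' : Fin m → ℝ := fun j => d j.castSucc - 1 + x j with hd'def
    have hd'val : ∀ j, d' j = d j.castSucc - 1 + x j := fun _ => rfl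
    have hmono' : Monotone d' := by
      intro j k hjk
      have h1 : d j.castSucc ≤ d k.castSucc := hmlt j k hjk
      have h2 := clamp_sub_le (sub_le_sub_left h1 c)
      rw [hd'val, hd'val, hxval, hxval]
      linarith
    have hcardx : ∀ (k : ℕ), k ≤ m →
        ∑ i ∈ Finset.univ.filter (fun i : Fin m => (i : ℕ) < k), d' i
          = (∑ i ∈ Finset.univ.filter (fun i : Fin m => (i : ℕ) < k), d i.castSucc)
            - k + ∑ i ∈ Finset.univ.filter (fun i : Fin m => (i : ℕ) < k), x i := by
      intro k hk
      rw [Finset.sum_congr rfl (fun i _ => hd'val i), Finset.sum_add_distrib,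
        Finset.sum_sub_distrib, Finset.sum_const, card_filter_lt k hk, nsmul_eq_mul, mul_one]
    have htot' : ∑ j, d' j = (m.choose 2 : ℝ) := by
      have e1 := hcardx m le_rfl
      rw [filter_lt_all] at e1
      rw [e1, hxsum]
      linarith
    have hG : ∀ (t k : ℕ), k ≤ m → m - k ≤ t →
        (k.choose 2 : ℝ) ≤ ∑ i ∈ Finset.univ.filter (fun i : Fin m => (i : ℕ) < k), d' i := by
      intro t
      induction t with
      | zero =>
        intro k hk h0
        have hkm : k = m := by omega
        subst hkm
        rw [filter_lt_all, htot']
      | succ t iht =>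
        intro k hk hkt
        rcases eq_or_lt_of_le hk with rfl | hklt
        · rw [filter_lt_all, htot']
        · rcases Nat.eq_zero_or_pos k with rfl | hkpos
          · simp
          · obtain ⟨k', rfl⟩ := Nat.exists_eq_succ_of_ne_zero (by omega : k ≠ 0)
            have hk1m : k' < m := by omega
            have hch := choose_succ_two_cast (k'+1)
            rcases le_total c (d (Fin.castSucc ⟨k'+1, hklt⟩)) with hc2 | hc2'
            · -- Case 2 : x vanishes from index k on
              have hxz : ∀ i : Fin m, ¬ ((i : ℕ) < k' + 1) → x i = 0 := by
                intro i hi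
                have hle : d (Fin.castSucc ⟨k'+1, hklt⟩) ≤ d i.castSucc :=
                  hmlt _ i (by simpa using Nat.le_of_not_lt hi)
                rw [hxval]
                rw [max_eq_left (by linarith), min_eq_right (by norm_num)]
              have hsplit := Finset.sum_filter_add_sum_filter_not Finset.univ
                (fun i : Fin m => (i : ℕ) < k' + 1) x
              have hzero : ∑ i ∈ Finset.univ.filter (fun i : Fin m => ¬ (i : ℕ) < k' + 1), x i = 0 :=
                Finset.sum_eq_zero (fun i hi => hxz i (Finset.mem_filter.mp hi).2)
              rw [hzero, add_zero, hxsum] at hsplit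
              have hLk2 := hL (k'+2) (by omega)
              rw [show k' + 2 = (k' + 1) + 1 from rfl,
                filter_lt_succ (show k' + 1 < m + 1 by omega), Finset.sum_insert (by simp)] at hLk2
              have hdk : d ⟨k' + 1, by omega⟩ ≤ D := hmono (Fin.le_last _)
              have e2 := hcardx (k'+1) (le_of_lt hklt)
              rw [hsplit, hcast_pref (k'+1) (le_of_lt hklt)] at e2
              have hchk := choose_succ_two_cast (k'+2)
              have hch2 := choose_succ_two_cast (k'+1)
              rw [e2]
              push_cast at hch2 hchk hLk2 ⊢
              linarith
            · rcases le_total (d (Fin.castSucc ⟨k', hk1m⟩) + 1) c with hc1 | hc1'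
              · -- Case 1 : x = 1 below k
                have hx1' : ∀ i ∈ Finset.univ.filter (fun i : Fin m => (i : ℕ) < k' + 1),
                    x i = 1 := by
                  intro i hi
                  simp only [Finset.mem_filter, Finset.mem_univ, true_and] at hi
                  have hle : d i.castSucc ≤ d (Fin.castSucc ⟨k', hk1m⟩) :=
                    hmlt i _ (by simpa using (by omega : (i : ℕ) ≤ k'))
                  rw [hxval]
                  rw [max_eq_right (by linarith), min_eq_left (by linarith)]
                have e3 : ∑ i ∈ Finset.univ.filter (fun i : Fin m => (i : ℕ) < k' + 1), d' i
                    = ∑ i ∈ Finset.univ.filter (fun i : Fin m => (i : ℕ) < k' + 1), d i.castSucc := by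
                  apply Finset.sum_congr rfl
                  intro i hi
                  rw [hd'val, hx1' i hi]
                  ring
                rw [e3, hcast_pref (k'+1) (le_of_lt hklt)]
                exact hL (k'+1) (by omega)
              · rcases le_total c ((k' : ℝ) + 1) with h3b | h3a
                · -- Case 3b : downward recursion
                  have hrec := iht (k'+2) (by omega) (by omega)
                  rw [show k' + 2 = (k' + 1) + 1 from rfl, filter_lt_succ hklt,
                    Finset.sum_insert (by simp)] at hrec
                  have hmono_k : d (Fin.castSucc ⟨k', hk1m⟩) ≤ d (Fin.castSucc ⟨k'+1, hklt⟩) :=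
                    hmlt _ _ (by simp)
                  have hdk' : d' ⟨k'+1, hklt⟩ = c - 1 := by
                    rw [hd'val, hxval]
                    rw [max_eq_right (by linarith), min_eq_right (by linarith)]
                    ring
                  rw [hdk'] at hrec
                  have hchk := choose_succ_two_cast (k'+2)
                  push_cast at hch hchk hrec ⊢
                  linarith
                · -- Case 3a : lemW
                  have hWa := lemW (fun i : Fin m => d i.castSucc)
                    (fun a b hab => hmlt a b hab)
                    (fun k hk => by rw [hcast_pref k hk]; exact hL k (by omega))
                    (k'+1) (le_of_lt hklt) c (by push_cast; linarith)
                  have hterm : ∀ i ∈ Finset.univ.filter (fun i : Fin m => (i : ℕ) < k' + 1),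
                      min c (d i.castSucc + 1) - 1 ≤ d' i := by
                    intro i _
                    rw [hd'val, hxval]
                    linarith [min_le_add_clamp c (d i.castSucc)]
                  have hsum_ge : ∑ i ∈ Finset.univ.filter (fun i : Fin m => (i : ℕ) < k' + 1),
                      (min c (d i.castSucc + 1) - 1)
                      ≤ ∑ i ∈ Finset.univ.filter (fun i : Fin m => (i : ℕ) < k' + 1), d' i :=
                    Finset.sum_le_sum hterm
                  rw [Finset.sum_sub_distrib, Finset.sum_const,
                    card_filter_lt (k'+1) (le_of_lt hklt), nsmul_eq_mul, mul_one] at hsum_ge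
                  push_cast at hch hWa hsum_ge ⊢
                  linarith
    have hL' : ∀ k : ℕ, k ≤ m → (k.choose 2 : ℝ) ≤
        ∑ i ∈ Finset.univ.filter (fun i : Fin m => (i : ℕ) < k), d' i :=
      fun k hk => hG m k hk (by omega)
    obtain ⟨β, ⟨hβ0, hβ1, hβs, hβd⟩, hβsc⟩ := ih d' hmono' hL' htot'
    refine ⟨fun i j => Fin.lastCases (Fin.lastCases 0 (fun j' => x j') j)
        (fun i' => Fin.lastCases (1 - x i') (fun j' => β i' j') j) i, ⟨?_, ?_, ?_, ?_⟩, ?_⟩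
    · intro i j
      induction i using Fin.lastCases with
      | last =>
        induction j using Fin.lastCases with
        | last => simp
        | cast j' => simp [hx0 j']
      | cast i' =>
        induction j using Fin.lastCases with
        | last => simp [hx1 i']
        | cast j' => simp [hβ0 i' j']
    · intro i j
      induction i using Fin.lastCases with
      | last =>
        induction j using Fin.lastCases with
        | last => simp
        | cast j' => simp [hx1 j']
      | cast i' =>
        induction j using Fin.lastCases with
        | last => simp [hx0 i']
        | cast j' => simp [hβ1 i' j']
    · intro i j hij
      induction i using Fin.lastCases with
      | last =>
        induction j using Fin.lastCases with
        | last => exact absurd rfl hij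
        | cast j' => simp
      | cast i' =>
        induction j using Fin.lastCases with
        | last => simp
        | cast j' =>
          have hij' : i' ≠ j' := fun h => hij (by rw [h])
          simp [hβs i' j' hij']
    · intro i
      induction i using Fin.lastCases with
      | last => simp
      | cast i' => simp [hβd i']
    · intro i
      induction i using Fin.lastCases with
      | last =>
        rw [Fin.sum_univ_castSucc]
        simp only [Fin.lastCases_last, Fin.lastCases_castSucc]
        rw [add_zero, hxsum]
      | cast i' =>
        rw [Fin.sum_univ_castSucc]
        simp only [Fin.lastCases_last, Fin.lastCases_castSucc]
        rw [hβsc i', hd'val]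
        ring

/-- A non-decreasing sequence of non-negative reals is the score sequence of some
self-converse generalised tournament iff it satisfies conditions I and II. -/
theorem selfConverse_gen_tournament_score_iff (n : ℕ) (d : Fin n → ℝ)
    (hmono : Monotone d) (hpos : ∀ i, 0 ≤ d i) :
    (∃ α : Fin n → Fin n → ℝ, IsGenTournament α ∧ IsSelfConverse α ∧
      ∀ i, ∑ j, α i j = d i) ↔ (CondI d ∧ CondII d) := by
  constructor
  · rintro ⟨α, ⟨hα0, hα1, hαs, hαd⟩, ⟨ρ, hρ⟩, hsc⟩
    have key : ∀ J : Finset (Fin n), ∑ i ∈ J, ∑ j ∈ J, α i j = (J.card.choose 2 : ℝ) := by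
      intro J
      have swap : ∑ i ∈ J, ∑ j ∈ J, α i j = ∑ i ∈ J, ∑ j ∈ J, α j i := Finset.sum_comm
      have hpair : ∀ i ∈ J, ∀ j ∈ J, α i j + α j i = if i = j then 0 else 1 := by
        intro i _ j _
        by_cases h : i = j
        · subst h; simp [hαd i]
        · simp [h, hαs i j h]
      have inner : ∀ i ∈ J, (∑ j ∈ J, if i = j then (0:ℝ) else 1) = (J.card : ℝ) - 1 := by
        intro i hi
        have hstep : ∀ j, (if i = j then (0:ℝ) else 1) = 1 - (if i = j then (1:ℝ) else 0) := by
          intro j; split_ifs <;> ring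
        rw [Finset.sum_congr rfl fun j _ => hstep j, Finset.sum_sub_distrib,
          Finset.sum_const, Finset.sum_ite_eq J i (fun _ => (1:ℝ)), if_pos hi]
        simp
      have hrows : ∀ i ∈ J, (∑ j ∈ J, α j i) + (∑ j ∈ J, α i j) = (J.card : ℝ) - 1 := by
        intro i hi
        rw [← Finset.sum_add_distrib, ← inner i hi]
        apply Finset.sum_congr rfl
        intro j hj
        rw [add_comm]
        exact hpair i hi j hj
      have h2 : ∑ i ∈ J, ∑ j ∈ J, α i j + ∑ i ∈ J, ∑ j ∈ J, α i j
          = (J.card : ℝ) * ((J.card : ℝ) - 1) := by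
        calc ∑ i ∈ J, ∑ j ∈ J, α i j + ∑ i ∈ J, ∑ j ∈ J, α i j
            = ∑ i ∈ J, ∑ j ∈ J, α j i + ∑ i ∈ J, ∑ j ∈ J, α i j := by rw [← swap]
          _ = ∑ i ∈ J, ((∑ j ∈ J, α j i) + (∑ j ∈ J, α i j)) := (Finset.sum_add_distrib).symm
          _ = ∑ _i ∈ J, ((J.card : ℝ) - 1) := Finset.sum_congr rfl hrows
          _ = (J.card : ℝ) * ((J.card : ℝ) - 1) := by rw [Finset.sum_const, nsmul_eq_mul]
      have hcc := Nat.cast_choose_two (K := ℝ) J.card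
      linarith
    have hI1 : ∀ J : Finset (Fin n), (J.card.choose 2 : ℝ) ≤ ∑ i ∈ J, d i := by
      intro J
      rw [← key J]
      apply Finset.sum_le_sum
      intro i _
      rw [← hsc i]
      exact Finset.sum_le_sum_of_subset_of_nonneg (Finset.subset_univ J) (fun j _ _ => hα0 i j)
    have hI2 : ∑ i, d i = (n.choose 2 : ℝ) := by
      have hk := key Finset.univ
      rw [Finset.card_univ, Fintype.card_fin] at hk
      calc ∑ i, d i = ∑ i, ∑ j, α i j := Finset.sum_congr rfl fun i _ => (hsc i).symm
        _ = (n.choose 2 : ℝ) := hk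
    refine ⟨⟨hI1, hI2⟩, ?_⟩
    have hdρ : ∀ i, d (ρ i) = (n : ℝ) - 1 - d i := by
      intro i
      have e2 : ∀ j, α (ρ i) (ρ j) = (1 - α i j) - (if j = i then 1 else 0) := by
        intro j
        by_cases h : j = i
        · subst h; simp [hαd]
        · have hh := hρ i j (Ne.symm h)
          simp only [if_neg h]
          linarith
      have hn1 : 0 < n := i.pos
      calc d (ρ i) = ∑ j, α (ρ i) j := (hsc _).symm
        _ = ∑ j, α (ρ i) (ρ j) := (Equiv.sum_comp ρ (α (ρ i))).symm
        _ = ∑ j, ((1 - α i j) - (if j = i then 1 else 0)) :=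
            Finset.sum_congr rfl (fun j _ => e2 j)
        _ = (n : ℝ) - 1 - d i := by
            rw [Finset.sum_sub_distrib, Finset.sum_sub_distrib, Finset.sum_const,
              Finset.card_univ, Fintype.card_fin, nsmul_eq_mul, mul_one, hsc i]
            rw [Finset.sum_ite_eq' Finset.univ i (fun _ => (1:ℝ)), if_pos (Finset.mem_univ i)]
            ring
    intro i
    have hmono2 : Monotone (d ∘ (Fin.revPerm.trans ρ)) := by
      intro a b hab
      simp only [Function.comp_apply, Equiv.trans_apply, Fin.revPerm_apply]
      rw [hdρ, hdρ]
      have hr : d (Fin.rev b) ≤ d (Fin.rev a) := hmono (Fin.rev_le_rev.mpr hab)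
      linarith
    have heq := congrFun (mono_comp_eq d (Fin.revPerm.trans ρ) hmono hmono2) i
    simp only [Function.comp_apply, Equiv.trans_apply, Fin.revPerm_apply] at heq
    rw [hdρ (Fin.rev i)] at heq
    linarith
  · rintro ⟨⟨hI1, hI2⟩, hII⟩
    have hL : ∀ k : ℕ, k ≤ n → (k.choose 2 : ℝ) ≤
        ∑ i ∈ Finset.univ.filter (fun i : Fin n => (i : ℕ) < k), d i := by
      intro k hk
      have := hI1 (Finset.univ.filter (fun i : Fin n => (i : ℕ) < k))
      rwa [card_filter_lt k hk] at this
    obtain ⟨β, ⟨hβ0, hβ1, hβs, hβd⟩, hβsc⟩ := exists_gt n d hmono hL hI2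
    refine ⟨fun i j => if i = j then 0 else (β i j + 1 - β i.rev j.rev)/2,
      ⟨?_, ?_, ?_, ?_⟩, ⟨Fin.revPerm, ?_⟩, ?_⟩
    · intro i j
      dsimp only
      by_cases h : i = j
      · simp [h]
      · rw [if_neg h]
        have h1 := hβ1 i.rev j.rev
        have h2 := hβ0 i j
        linarith
    · intro i j
      dsimp only
      by_cases h : i = j
      · simp [h]
      · rw [if_neg h]
        have h1 := hβ0 i.rev j.rev
        have h2 := hβ1 i j
        linarith
    · intro i j hij
      dsimp only
      rw [if_neg hij, if_neg (Ne.symm hij)]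
      have h1 := hβs i j hij
      have h2 := hβs i.rev j.rev (fun h => hij (Fin.rev_injective h))
      linarith
    · intro i; simp
    · intro i j hij
      dsimp only
      have hrev : Fin.rev i ≠ Fin.rev j := fun h => hij (Fin.rev_injective h)
      rw [if_neg hij]
      simp only [Fin.revPerm_apply]
      rw [if_neg hrev, Fin.rev_rev, Fin.rev_rev]
      ring
    · intro i
      dsimp only
      have e : ∀ j, (if i = j then (0:ℝ) else (β i j + 1 - β i.rev j.rev)/2)
          = (β i j + 1 - β i.rev j.rev)/2 - (if i = j then (1:ℝ)/2 else 0) := by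
        intro j
        by_cases h : i = j
        · subst h; simp [hβd]
        · simp [h]
      simp only [e]
      rw [Finset.sum_sub_distrib]
      have hrevs : ∑ j : Fin n, β i.rev j.rev = d i.rev := by
        rw [← hβsc i.rev]
        exact Equiv.sum_comp Fin.revPerm (β i.rev)
      have hsum1 : ∑ j : Fin n, (β i j + 1 - β i.rev j.rev)/2
          = ((∑ j : Fin n, β i j) + (n : ℝ) - ∑ j : Fin n, β i.rev j.rev)/2 := by
        rw [← Finset.sum_div, Finset.sum_sub_distrib, Finset.sum_add_distrib,
          Finset.sum_const, Finset.card_univ, Fintype.card_fin, nsmul_eq_mul, mul_one]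
      have hhalf : ∑ j : Fin n, (if i = j then (1:ℝ)/2 else 0) = 1/2 := by
        rw [Finset.sum_ite_eq Finset.univ i (fun _ => (1:ℝ)/2), if_pos (Finset.mem_univ i)]
      rw [hsum1, hhalf, hβsc i, hrevs]
      have := hII i
      linarith
end

section
/- A non-decreasing sequence (d_1, ..., d_n) of non-negative rational numbers is the score sequence of some self-converse generalised tournament on n vertices if and only if it satisfies condition I (for every subset J of {1,...,n}, the sum of d_i over i in J is at least binom(|J|,2), with equality when J = {1,...,n}) and condition II (d_i + d_{n+1-i} = n - 1 for all i = 1,...,n). -/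
/-- Condition I for a rational sequence. -/
def CondIQ {n : ℕ} (d : Fin n → ℚ) : Prop :=
  (∀ J : Finset (Fin n), (J.card.choose 2 : ℚ) ≤ ∑ i ∈ J, d i) ∧
  ∑ i, d i = (n.choose 2 : ℚ)

/-- Condition II for a rational sequence (`Fin.rev` plays the role of `i ↦ n+1-i`). -/
def CondIIQ {n : ℕ} (d : Fin n → ℚ) : Prop :=
  ∀ i : Fin n, d i + d i.rev = (n : ℚ) - 1

/- ------------------------------------------------------------------ -/
/- Auxiliary material                                                  -/
/- ------------------------------------------------------------------ -/

noncomputable def myClamp (t : ℝ) : ℝ := max 0 (min 1 t)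

lemma myClamp_nonneg (t : ℝ) : 0 ≤ myClamp t := le_max_left _ _

lemma myClamp_le_one (t : ℝ) : myClamp t ≤ 1 :=
  max_le zero_le_one (min_le_left _ _)

lemma myClamp_of_nonpos {t : ℝ} (h : t ≤ 0) : myClamp t = 0 := by
  unfold myClamp
  rw [min_eq_right (by linarith), max_eq_left h]

lemma myClamp_of_one_le {t : ℝ} (h : 1 ≤ t) : myClamp t = 1 := by
  unfold myClamp
  rw [min_eq_left h, max_eq_right zero_le_one]

lemma myClamp_of_mem {t : ℝ} (h0 : 0 ≤ t) (h1 : t ≤ 1) : myClamp t = t := by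
  unfold myClamp
  rw [min_eq_right h1, max_eq_right h0]

lemma myClamp_shift (θ t : ℝ) : t + myClamp (θ - t) = max t (min θ (t + 1)) := by
  unfold myClamp
  rcases le_total (θ - t) 0 with h | h
  · rw [min_eq_right (by linarith), max_eq_left h,
      min_eq_left (by linarith), max_eq_left (by linarith)]
    ring
  · rcases le_total 1 (θ - t) with h2 | h2
    · rw [min_eq_left h2, max_eq_right zero_le_one,
        min_eq_right (by linarith), max_eq_right (by linarith)]
    · rw [min_eq_right h2, max_eq_right h, min_eq_left (by linarith),
        max_eq_right (by linarith)]
      ring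

lemma add_myClamp_mono (θ : ℝ) {a b : ℝ} (h : a ≤ b) :
    a + myClamp (θ - a) ≤ b + myClamp (θ - b) := by
  rw [myClamp_shift, myClamp_shift]
  exact max_le_max h (min_le_min le_rfl (by linarith))

/-- Moon's theorem on score sequences of generalised tournaments,
in prefix-sum form over ℕ-indexed data. -/
theorem moon_exists : ∀ (n : ℕ) (d : ℕ → ℝ),
    (∀ i j, i ≤ j → j < n → d i ≤ d j) →
    (∀ k, k ≤ n → ((k : ℝ) * ((k : ℝ) - 1) / 2) ≤ ∑ j ∈ Finset.range k, d j) →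
    (∑ j ∈ Finset.range n, d j = (n : ℝ) * ((n : ℝ) - 1) / 2) →
    ∃ α : Fin n → Fin n → ℝ, IsGenTournament α ∧ ∀ i : Fin n, ∑ j, α i j = d i.val := by
  intro n
  induction n with
  | zero =>
      intro d _ _ _
      refine ⟨fun i => i.elim0, ⟨fun i => i.elim0, fun i => i.elim0,
        fun i => i.elim0, fun i => i.elim0⟩, fun i => i.elim0⟩
  | succ n ih =>
      intro d hmono hpre htot
      classical
      -- basic facts
      have hd0 : (0 : ℝ) ≤ d 0 := by
        have := hpre 1 (by omega)
        simpa using this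
      have hdnn : ∀ j, j < n + 1 → 0 ≤ d j := fun j hj =>
        le_trans hd0 (hmono 0 j (Nat.zero_le _) hj)
      have hSn := hpre n (by omega)
      have htot' : ∑ j ∈ Finset.range n, d j + d n = ((n : ℝ) + 1) * (n : ℝ) / 2 := by
        rw [Finset.sum_range_succ] at htot
        push_cast at htot
        linarith
      have hdn_le : d n ≤ (n : ℝ) := by nlinarith
      have hdn_nonneg : 0 ≤ d n := hdnn n (by omega)
      -- find the threshold θ by the intermediate value theorem
      set f : ℝ → ℝ := fun θ => ∑ j ∈ Finset.range n, myClamp (θ - d j) with hf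
      have hcont : Continuous f := by
        apply continuous_finset_sum
        intro j _
        unfold myClamp
        exact continuous_const.max (continuous_const.min (continuous_id.sub continuous_const))
      have hf0 : f 0 = 0 := by
        apply Finset.sum_eq_zero
        intro j hj
        exact myClamp_of_nonpos (by
          have := hdnn j (by simpa using Finset.mem_range.mp hj |>.trans_le (Nat.le_succ n))
          linarith)
      have hf1 : f (d n + 1) = n := by
        have h : ∀ j ∈ Finset.range n, myClamp (d n + 1 - d j) = 1 := by
          intro j hj
          exact myClamp_of_one_le (by
            have := hmono j n (le_of_lt (Finset.mem_range.mp hj)) (by omega)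
            linarith)
        show ∑ j ∈ Finset.range n, myClamp (d n + 1 - d j) = (n : ℝ)
        rw [Finset.sum_congr rfl h]
        simp
      have hmem : d n ∈ Set.Icc (f 0) (f (d n + 1)) := by
        rw [hf0, hf1]; exact ⟨hdn_nonneg, hdn_le⟩
      obtain ⟨θ, hθmem, hθeq⟩ :=
        intermediate_value_Icc (by linarith : (0:ℝ) ≤ d n + 1) hcont.continuousOn hmem
      set x : ℕ → ℝ := fun j => myClamp (θ - d j) with hx
      have hxtot : ∑ j ∈ Finset.range n, x j = d n := hθeq
      have hx01 : ∀ j, 0 ≤ x j ∧ x j ≤ 1 := fun j => ⟨myClamp_nonneg _, myClamp_le_one _⟩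
      -- the two breakpoints q and M
      have hq_ex : ∃ k, n ≤ k ∨ θ ≤ d k := ⟨n, Or.inl le_rfl⟩
      set q := Nat.find hq_ex with hq_def
      have hq_le : q ≤ n := Nat.find_min' hq_ex (Or.inl le_rfl)
      have hq_lt : ∀ j, j < q → j < n ∧ d j < θ := by
        intro j hj
        have := Nat.find_min hq_ex hj
        push_neg at this
        exact ⟨by omega, this.2⟩
      have hq_ge : ∀ j, q ≤ j → j < n → θ ≤ d j := by
        intro j h1 h2
        rcases Nat.find_spec hq_ex with h | h
        · omega
        · exact le_trans h (hmono q j h1 (by omega))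
      have hM_ex : ∃ k, n ≤ k ∨ θ - 1 < d k := ⟨n, Or.inl le_rfl⟩
      set M := Nat.find hM_ex with hM_def
      have hM_le_q : M ≤ q := by
        apply Nat.find_min' hM_ex
        rcases Nat.find_spec hq_ex with h | h
        · exact Or.inl h
        · exact Or.inr (by linarith)
      have hM_lt : ∀ j, j < M → j < n ∧ d j ≤ θ - 1 := by
        intro j hj
        have := Nat.find_min hM_ex hj
        push_neg at this
        exact ⟨by omega, this.2⟩
      have hM_ge : ∀ j, M ≤ j → j < n → θ - 1 < d j := by
        intro j h1 h2
        rcases Nat.find_spec hM_ex with h | h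
        · omega
        · exact lt_of_lt_of_le h (hmono M j h1 (by omega))
      -- values of x on the three regions
      have hx1 : ∀ j, j < M → x j = 1 := fun j hj =>
        myClamp_of_one_le (by have := (hM_lt j hj).2; linarith)
      have hxeq : ∀ j, M ≤ j → j < q → x j = θ - d j := by
        intro j h1 h2
        have hjn := (hq_lt j h2).1
        have h3 := (hq_lt j h2).2
        have h4 := hM_ge j h1 hjn
        exact myClamp_of_mem (by linarith) (by linarith)
      have hx0 : ∀ j, q ≤ j → j < n → x j = 0 := fun j h1 h2 =>
        myClamp_of_nonpos (by have := hq_ge j h1 h2; linarith)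
      -- partial sum formula in the middle region
      have hXle : ∀ k, M ≤ k → k ≤ q →
          ∑ j ∈ Finset.range k, x j
            = (M : ℝ) + ((k : ℝ) - M) * θ
              - (∑ j ∈ Finset.range k, d j - ∑ j ∈ Finset.range M, d j) := by
        intro k h1 h2
        have hsplit := Finset.sum_range_add_sum_Ico x h1
        have hsplitd := Finset.sum_range_add_sum_Ico d h1
        have hM : ∑ j ∈ Finset.range M, x j = (M : ℝ) := by
          rw [Finset.sum_congr rfl (fun j hj => hx1 j (Finset.mem_range.mp hj))]
          simp
        have hmid : ∑ j ∈ Finset.Ico M k, x j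
            = ((k : ℝ) - M) * θ - ∑ j ∈ Finset.Ico M k, d j := by
          rw [Finset.sum_congr rfl (fun j hj => by
            have hj' := Finset.mem_Ico.mp hj
            exact hxeq j hj'.1 (lt_of_lt_of_le hj'.2 h2))]
          rw [Finset.sum_sub_distrib, Finset.sum_const, Nat.card_Ico, nsmul_eq_mul]
          rw [Nat.cast_sub h1]
        have : ∑ j ∈ Finset.Ico M k, d j
            = ∑ j ∈ Finset.range k, d j - ∑ j ∈ Finset.range M, d j := by linarith
        linarith
      -- total x over range q equals d n
      have hXq_dn : ∑ j ∈ Finset.range q, x j = d n := by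
        have hsplit := Finset.sum_range_add_sum_Ico x hq_le
        have : ∑ j ∈ Finset.Ico q n, x j = 0 := by
          apply Finset.sum_eq_zero
          intro j hj
          have hj' := Finset.mem_Ico.mp hj
          exact hx0 j hj'.1 hj'.2
        linarith
      -- the key prefix estimate
      have hc : ∀ k, k ≤ n → (k : ℝ) * ((k : ℝ) + 1) / 2
          ≤ ∑ j ∈ Finset.range k, d j + ∑ j ∈ Finset.range k, x j := by
        intro k hk
        by_cases hqk : q ≤ k
        · -- all the mass of x sits inside range k
          have hXk : ∑ j ∈ Finset.range k, x j = d n := by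
            have hsplit := Finset.sum_range_add_sum_Ico x hk
            have : ∑ j ∈ Finset.Ico k n, x j = 0 := by
              apply Finset.sum_eq_zero
              intro j hj
              have hj' := Finset.mem_Ico.mp hj
              exact hx0 j (le_trans hqk hj'.1) hj'.2
            linarith
          have hdk : d k ≤ d n := hmono k n hk (by omega)
          have hp := hpre (k + 1) (by omega)
          have hS : ∑ j ∈ Finset.range (k+1), d j = ∑ j ∈ Finset.range k, d j + d k :=
            Finset.sum_range_succ d k
          push_cast at hp
          rw [hXk]
          linarith
        · have hkq : k < q := not_le.mp hqk
          by_cases hkM : k ≤ M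
          · -- all x's in range k are 1
            have hXk : ∑ j ∈ Finset.range k, x j = (k : ℝ) := by
              rw [Finset.sum_congr rfl (fun j hj => hx1 j
                (lt_of_lt_of_le (Finset.mem_range.mp hj) hkM))]
              simp
            have hp := hpre k (by omega)
            rw [hXk]
            linarith
          · have hMk : M ≤ k := le_of_not_ge hkM
            have hMkstrict : M < k := lt_of_not_ge hkM
            have hXk := hXle k hMk (le_of_lt hkq)
            have hXqf := hXle q hM_le_q le_rfl
            -- (★) : S M + M + (q - M)θ = d n + S q ≥ S (q+1) ≥ q(q+1)/2
            have hstar : ∑ j ∈ Finset.range M, d j + (M : ℝ) + ((q : ℝ) - M) * θ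
                = d n + ∑ j ∈ Finset.range q, d j := by
              rw [hXqf] at hXq_dn
              linarith
            have hdq : d q ≤ d n := hmono q n hq_le (by omega)
            have hSq1 : ∑ j ∈ Finset.range (q+1), d j
                = ∑ j ∈ Finset.range q, d j + d q := Finset.sum_range_succ d q
            have hpq := hpre (q + 1) (by omega)
            push_cast at hpq
            have hBig : ((q : ℝ) + 1) * q / 2
                ≤ ∑ j ∈ Finset.range M, d j + (M : ℝ) + ((q : ℝ) - M) * θ := by
              linarith
            have hkqR : (k : ℝ) < (q : ℝ) := by exact_mod_cast hkq
            have hMkR : (M : ℝ) < (k : ℝ) := by exact_mod_cast hMkstrict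
            rw [hXk]
            by_cases hθc : θ ≤ ((q : ℝ) + k + 1) / 2
            · have hprod := mul_le_mul_of_nonneg_left hθc
                (by linarith : (0:ℝ) ≤ (q : ℝ) - k)
              linarith [hBig, hprod]
            · have hθc' : ((q : ℝ) + k + 1) / 2 ≤ θ := le_of_not_ge hθc
              have h2 : ((M : ℝ) + k + 1) / 2 ≤ θ := by linarith
              have hSM := hpre M (by omega)
              have hprod := mul_le_mul_of_nonneg_left h2
                (by linarith : (0:ℝ) ≤ (k : ℝ) - M)
              linarith [hSM, hprod]
      -- residual sequence
      set d' : ℕ → ℝ := fun j => d j - 1 + x j with hd'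
      have hmono' : ∀ i j, i ≤ j → j < n → d' i ≤ d' j := by
        intro i j hij hjn
        have h := add_myClamp_mono θ (hmono i j hij (by omega))
        simp only [hd', hx]
        linarith
      have hsum' : ∀ k, ∑ j ∈ Finset.range k, d' j
          = ∑ j ∈ Finset.range k, d j - (k : ℝ) + ∑ j ∈ Finset.range k, x j := by
        intro k
        simp only [hd']
        rw [Finset.sum_add_distrib, Finset.sum_sub_distrib, Finset.sum_const,
          Finset.card_range, nsmul_eq_mul, mul_one]
      have hpre' : ∀ k, k ≤ n → ((k : ℝ) * ((k : ℝ) - 1) / 2)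
          ≤ ∑ j ∈ Finset.range k, d' j := by
        intro k hk
        rw [hsum']
        have := hc k hk
        linarith
      have htot'' : ∑ j ∈ Finset.range n, d' j = (n : ℝ) * ((n : ℝ) - 1) / 2 := by
        rw [hsum', hxtot]
        linarith
      obtain ⟨α', ⟨h1', h2', h3', h4'⟩, hrow'⟩ := ih d' hmono' hpre' htot''
      -- build the new tournament
      refine ⟨Fin.snoc (fun i : Fin n => Fin.snoc (fun j : Fin n => α' i j) (1 - x i))
        (Fin.snoc (fun j : Fin n => x j) 0), ⟨?_, ?_, ?_, ?_⟩, ?_⟩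
      · intro i j
        induction i using Fin.lastCases with
        | last =>
            induction j using Fin.lastCases with
            | last => simp
            | cast j => simp [(hx01 (j : ℕ)).1]
        | cast i =>
            induction j using Fin.lastCases with
            | last => simp; linarith [(hx01 (i : ℕ)).2]
            | cast j => simp [h1' i j]
      · intro i j
        induction i using Fin.lastCases with
        | last =>
            induction j using Fin.lastCases with
            | last => simp
            | cast j => simp [(hx01 (j : ℕ)).2]
        | cast i =>
            induction j using Fin.lastCases with
            | last => simp; linarith [(hx01 (i : ℕ)).1]
            | cast j => simp [h2' i j]
      · intro i j hij
        induction i using Fin.lastCases with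
        | last =>
            induction j using Fin.lastCases with
            | last => exact absurd rfl hij
            | cast j => simp
        | cast i =>
            induction j using Fin.lastCases with
            | last => simp
            | cast j =>
                have hij' : i ≠ j := fun hc => hij (by rw [hc])
                simp [h3' i j hij']
      · intro i
        induction i using Fin.lastCases with
        | last => simp
        | cast i => simp [h4' i]
      · intro i
        rw [Fin.sum_univ_castSucc]
        induction i using Fin.lastCases with
        | last =>
            simp only [Fin.snoc_last, Fin.snoc_castSucc]
            rw [Fin.sum_univ_eq_sum_range (fun j => x j) n, hxtot]
            simp
        | cast i =>
            simp only [Fin.snoc_last, Fin.snoc_castSucc, Fin.coe_castSucc]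
            rw [hrow' i]
            simp only [hd']
            ring

/-- If two monotone functions on `Fin n` differ by a permutation, they are equal. -/
lemma monotone_perm_le {n : ℕ} {f g : Fin n → ℝ} (hf : Monotone f) (hg : Monotone g)
    (σ : Equiv.Perm (Fin n)) (h : ∀ i, f i = g (σ i)) : ∀ i, f i ≤ g i := by
  intro i
  by_contra hcon
  push_neg at hcon
  set B : Finset (Fin n) := Finset.univ.filter (fun j => f i ≤ f j) with hB
  have h1 : Finset.Ici i ⊆ B := by
    intro j hj
    rw [Finset.mem_filter]
    exact ⟨Finset.mem_univ _, hf (Finset.mem_Ici.mp hj)⟩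
  have h2 : B.image σ ⊆ Finset.Ioi i := by
    intro k hk
    obtain ⟨j, hj, rfl⟩ := Finset.mem_image.mp hk
    have hfj : f i ≤ f j := (Finset.mem_filter.mp hj).2
    rw [h j] at hfj
    rw [Finset.mem_Ioi]
    by_contra hle
    push_neg at hle
    have := hg hle
    linarith
  have hc1 : (Finset.Ici i).card ≤ B.card := Finset.card_le_card h1
  have hc2 : (B.image σ).card = B.card :=
    Finset.card_image_of_injective B σ.injective
  have hc3 : (B.image σ).card ≤ (Finset.Ioi i).card := Finset.card_le_card h2
  rw [Fin.card_Ici] at hc1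
  rw [Fin.card_Ioi] at hc3
  have := i.isLt
  omega

lemma monotone_perm_eq {n : ℕ} {f g : Fin n → ℝ} (hf : Monotone f) (hg : Monotone g)
    (σ : Equiv.Perm (Fin n)) (h : ∀ i, f i = g (σ i)) : ∀ i, f i = g i := by
  intro i
  have h1 := monotone_perm_le hf hg σ h i
  have h2 := monotone_perm_le hg hf σ⁻¹ (fun j => by
    have := h (σ⁻¹ j)
    simp at this
    exact this.symm) i
  linarith

/-- Double counting: in a generalised tournament, for any subset J,
the sum over J×J of α equals (|J|² - |J|)/2. -/
lemma gen_tournament_subset_sum {n : ℕ} {α : Fin n → Fin n → ℝ}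
    (hα : IsGenTournament α) (J : Finset (Fin n)) :
    ∑ i ∈ J, ∑ j ∈ J, α i j = ((J.card : ℝ) ^ 2 - J.card) / 2 := by
  obtain ⟨hnn, hle1, hcompl, hdiag⟩ := hα
  have hswap : ∑ i ∈ J, ∑ j ∈ J, α i j = ∑ i ∈ J, ∑ j ∈ J, α j i := Finset.sum_comm
  have h2 : ∑ i ∈ J, ∑ j ∈ J, α i j + ∑ i ∈ J, ∑ j ∈ J, α j i
      = ∑ i ∈ J, ∑ j ∈ J, (if i = j then (0:ℝ) else 1) := by
    rw [← Finset.sum_add_distrib]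
    apply Finset.sum_congr rfl
    intro i _
    rw [← Finset.sum_add_distrib]
    apply Finset.sum_congr rfl
    intro j _
    by_cases hij : i = j
    · subst hij; rw [if_pos rfl, hdiag i]; ring
    · rw [if_neg hij]; exact hcompl i j hij
  have h3 : ∑ i ∈ J, ∑ j ∈ J, (if i = j then (0:ℝ) else 1)
      = (J.card : ℝ) ^ 2 - J.card := by
    have hinner : ∀ i ∈ J, ∑ j ∈ J, (if i = j then (0:ℝ) else 1) = (J.card : ℝ) - 1 := by
      intro i hi
      have : ∀ j ∈ J, (if i = j then (0:ℝ) else 1) = 1 - (if i = j then (1:ℝ) else 0) := by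
        intro j _
        split_ifs <;> norm_num
      rw [Finset.sum_congr rfl this, Finset.sum_sub_distrib, Finset.sum_const,
        Finset.sum_ite_eq J i (fun _ => (1:ℝ)), if_pos hi, nsmul_eq_mul, mul_one]
    rw [Finset.sum_congr rfl hinner, Finset.sum_const, nsmul_eq_mul]
    ring
  rw [hswap] at h2
  rw [h3] at h2
  linarith

/-- A non-decreasing sequence of non-negative rationals is the score sequence of some
self-converse generalised tournament iff it satisfies conditions I and II. -/
theorem selfConverse_gen_tournament_rat_score_iff (n : ℕ) (d : Fin n → ℚ)
    (hmono : Monotone d) (hpos : ∀ i, 0 ≤ d i) :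
    (∃ α : Fin n → Fin n → ℝ, IsGenTournament α ∧ IsSelfConverse α ∧
      ∀ i, ∑ j, α i j = (d i : ℝ)) ↔ (CondIQ d ∧ CondIIQ d) := by
  constructor
  · rintro ⟨α, hgt, ⟨ρ, hρ⟩, hrow⟩
    obtain ⟨hnn, hle1, hcompl, hdiag⟩ := hgt
    constructor
    · constructor
      · -- condition I, inequality for each subset
        intro J
        have hJ := gen_tournament_subset_sum ⟨hnn, hle1, hcompl, hdiag⟩ J
        have h4 : ∑ i ∈ J, ∑ j ∈ J, α i j ≤ ∑ i ∈ J, (d i : ℝ) := by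
          apply Finset.sum_le_sum
          intro i _
          rw [← hrow i]
          exact Finset.sum_le_sum_of_subset_of_nonneg (Finset.subset_univ J)
            (fun j _ _ => hnn i j)
        rw [hJ] at h4
        have : ((J.card.choose 2 : ℚ) : ℝ) ≤ (((∑ i ∈ J, d i) : ℚ) : ℝ) := by
          push_cast
          rw [Nat.cast_choose_two]
          nlinarith
        exact_mod_cast this
      · -- condition I, total equality
        have hJ := gen_tournament_subset_sum ⟨hnn, hle1, hcompl, hdiag⟩
          (Finset.univ : Finset (Fin n))
        have h4 : ∑ i : Fin n, ∑ j ∈ Finset.univ, α i j = ∑ i : Fin n, (d i : ℝ) :=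
          Finset.sum_congr rfl (fun i _ => hrow i)
        rw [hJ] at h4
        have : (((∑ i, d i) : ℚ) : ℝ) = ((n.choose 2 : ℚ) : ℝ) := by
          push_cast
          rw [Nat.cast_choose_two]
          rw [Finset.card_univ, Fintype.card_fin] at h4
          nlinarith
        exact_mod_cast this
    · -- condition II
      have hscore : ∀ i, (d i : ℝ) + (d (ρ i) : ℝ) = (n : ℝ) - 1 := by
        intro i
        have hB : ∑ j : Fin n, α (ρ i) (ρ j) = ∑ k : Fin n, α (ρ i) k :=
          Equiv.sum_comp ρ (fun k => α (ρ i) k)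
        have hAB : (d i : ℝ) + (d (ρ i) : ℝ)
            = ∑ j : Fin n, (α i j + α (ρ i) (ρ j)) := by
          rw [Finset.sum_add_distrib, hB, hrow i, hrow (ρ i)]
        have hterm : ∀ j : Fin n, α i j + α (ρ i) (ρ j) = if i = j then 0 else 1 := by
          intro j
          by_cases hij : i = j
          · subst hij
            rw [if_pos rfl, hdiag, hdiag]; ring
          · rw [if_neg hij, hρ i j hij]; ring
        rw [Finset.sum_congr rfl (fun j _ => hterm j)] at hAB
        have : ∑ j : Fin n, (if i = j then (0:ℝ) else 1) = (n : ℝ) - 1 := by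
          have : ∀ j ∈ Finset.univ, (if i = j then (0:ℝ) else 1)
              = 1 - (if i = j then (1:ℝ) else 0) := by
            intro j _; split_ifs <;> norm_num
          rw [Finset.sum_congr rfl this, Finset.sum_sub_distrib, Finset.sum_const,
            Finset.sum_ite_eq Finset.univ i (fun _ => (1:ℝ)), if_pos (Finset.mem_univ i),
            nsmul_eq_mul, mul_one, Finset.card_univ, Fintype.card_fin]
        rw [this] at hAB
        exact hAB
      intro i
      set f : Fin n → ℝ := fun i => (d i : ℝ) with hfdef
      set g : Fin n → ℝ := fun i => ((n : ℝ) - 1) - (d i.rev : ℝ) with hgdef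
      have hfm : Monotone f := fun a b h => Rat.cast_le.mpr (hmono h)
      have hgm : Monotone g := by
        intro a b h
        simp only [hgdef]
        have : b.rev ≤ a.rev := Fin.rev_le_rev.mpr h
        have := Rat.cast_le (K := ℝ).mpr (hmono this)
        linarith
      have hkey : ∀ i, f i = g ((ρ.trans Fin.revPerm) i) := by
        intro i
        simp only [hgdef, hfdef, Equiv.trans_apply, Fin.revPerm_apply, Fin.rev_rev]
        have := hscore i
        linarith
      have := monotone_perm_eq hfm hgm (ρ.trans Fin.revPerm) hkey i
      simp only [hfdef, hgdef] at this
      have : (((d i + d i.rev) : ℚ) : ℝ) = (((n : ℚ) - 1 : ℚ) : ℝ) := by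
        push_cast
        linarith
      exact_mod_cast this
  · rintro ⟨⟨hI, htotQ⟩, hII⟩
    classical
    -- extend d to an ℕ-indexed function
    set D : ℕ → ℝ := fun k => if h : k < n then ((d ⟨k, h⟩ : ℚ) : ℝ) else 0 with hD
    have hDval : ∀ i : Fin n, D (i : ℕ) = (d i : ℝ) := by
      intro i
      simp only [hD]
      rw [dif_pos i.isLt]
    have hDmono : ∀ i j, i ≤ j → j < n → D i ≤ D j := by
      intro i j hij hjn
      have hin : i < n := lt_of_le_of_lt hij hjn
      simp only [hD]
      rw [dif_pos hin, dif_pos hjn]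
      exact_mod_cast hmono (show (⟨i, hin⟩ : Fin n) ≤ ⟨j, hjn⟩ from hij)
    have hDpre : ∀ k, k ≤ n → ((k : ℝ) * ((k : ℝ) - 1) / 2) ≤ ∑ j ∈ Finset.range k, D j := by
      intro k hk
      have h1 : ∑ j ∈ Finset.range k, D j = ∑ i : Fin k, D (i : ℕ) :=
        (Fin.sum_univ_eq_sum_range D k).symm
      have h2 : ∀ i : Fin k, D (i : ℕ) = (d (Fin.castLE hk i) : ℝ) := by
        intro i
        simp only [hD]
        rw [dif_pos (lt_of_lt_of_le i.isLt hk)]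
        rfl
      have h3 : ∑ i : Fin k, D (i : ℕ)
          = ∑ i ∈ Finset.univ.map (Fin.castLEEmb hk), ((d i : ℚ) : ℝ) := by
        rw [Finset.sum_map]
        exact Finset.sum_congr rfl (fun i _ => h2 i)
      have hcard : (Finset.univ.map (Fin.castLEEmb hk)).card = k := by
        rw [Finset.card_map, Finset.card_univ, Fintype.card_fin]
      have hIJ := hI (Finset.univ.map (Fin.castLEEmb hk))
      rw [hcard] at hIJ
      have hIJ' : ((k.choose 2 : ℚ) : ℝ)
          ≤ ((∑ i ∈ Finset.univ.map (Fin.castLEEmb hk), d i : ℚ) : ℝ) := by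
        exact_mod_cast hIJ
      rw [Rat.cast_sum] at hIJ'
      push_cast at hIJ'
      rw [h1, h3]
      rw [Nat.cast_choose_two] at hIJ'
      convert hIJ' using 2 <;> push_cast <;> ring
    have hDtot : ∑ j ∈ Finset.range n, D j = (n : ℝ) * ((n : ℝ) - 1) / 2 := by
      have h1 : ∑ j ∈ Finset.range n, D j = ∑ i : Fin n, D (i : ℕ) :=
        (Fin.sum_univ_eq_sum_range D n).symm
      rw [h1, Finset.sum_congr rfl (fun i _ => hDval i)]
      have : ((∑ i, d i : ℚ) : ℝ) = ((n.choose 2 : ℚ) : ℝ) := by exact_mod_cast htotQ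
      rw [Rat.cast_sum] at this
      rw [this]
      push_cast
      rw [Nat.cast_choose_two]
    obtain ⟨α0, ⟨h1, h2, h3, h4⟩, hrow0⟩ := moon_exists n D hDmono hDpre hDtot
    have hrow0' : ∀ i : Fin n, ∑ j, α0 i j = (d i : ℝ) := by
      intro i
      rw [hrow0 i, hDval i]
    -- column sums
    have hcol : ∀ i : Fin n, ∑ k, α0 k i = (n : ℝ) - 1 - (d i : ℝ) := by
      intro i
      have hAB : ∑ k : Fin n, (α0 i k + α0 k i)
          = ∑ k : Fin n, (if i = k then (0:ℝ) else 1) := by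
        apply Finset.sum_congr rfl
        intro k _
        by_cases hik : i = k
        · subst hik; rw [if_pos rfl, h4]; ring
        · rw [if_neg hik]; exact h3 i k hik
      have hval : ∑ k : Fin n, (if i = k then (0:ℝ) else 1) = (n : ℝ) - 1 := by
        have : ∀ k ∈ Finset.univ, (if i = k then (0:ℝ) else 1)
            = 1 - (if i = k then (1:ℝ) else 0) := by
          intro k _; split_ifs <;> norm_num
        rw [Finset.sum_congr rfl this, Finset.sum_sub_distrib, Finset.sum_const,
          Finset.sum_ite_eq Finset.univ i (fun _ => (1:ℝ)), if_pos (Finset.mem_univ i),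
          nsmul_eq_mul, mul_one, Finset.card_univ, Fintype.card_fin]
      rw [Finset.sum_add_distrib, hrow0' i] at hAB
      rw [hval] at hAB
      linarith
    have hIIR : ∀ i : Fin n, (d i.rev : ℝ) = (n : ℝ) - 1 - (d i : ℝ) := by
      intro i
      have := hII i
      have : ((d i + d i.rev : ℚ) : ℝ) = (((n : ℚ) - 1 : ℚ) : ℝ) := by exact_mod_cast this
      push_cast at this
      linarith
    -- symmetrised tournament
    refine ⟨fun i j => (α0 i j + α0 j.rev i.rev) / 2, ⟨?_, ?_, ?_, ?_⟩, ⟨Fin.revPerm, ?_⟩, ?_⟩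
    · intro i j
      have := h1 i j
      have := h1 j.rev i.rev
      dsimp only
      linarith
    · intro i j
      have := h2 i j
      have := h2 j.rev i.rev
      dsimp only
      linarith
    · intro i j hij
      have hij' : j.rev ≠ i.rev := fun hcon => hij (Fin.rev_injective hcon).symm
      have e1 := h3 i j hij
      have e2 := h3 j.rev i.rev hij'
      dsimp only
      linarith
    · intro i
      dsimp only
      rw [h4, h4]
      ring
    · intro i j hij
      have hij' : j.rev ≠ i.rev := fun hcon => hij (Fin.rev_injective hcon).symm
      have e1 := h3 i j hij
      have e2 := h3 j.rev i.rev hij'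
      simp only [Fin.revPerm_apply, Fin.rev_rev]
      linarith
    · intro i
      have hsum : ∑ j : Fin n, (α0 i j + α0 j.rev i.rev) / 2
          = (∑ j : Fin n, α0 i j + ∑ j : Fin n, α0 j.rev i.rev) / 2 := by
        rw [← Finset.sum_add_distrib, ← Finset.sum_div]
      have hrev : ∑ j : Fin n, α0 j.rev i.rev = ∑ k : Fin n, α0 k i.rev :=
        Equiv.sum_comp Fin.revPerm (fun k => α0 k i.rev)
      rw [hsum, hrev, hrow0' i, hcol i.rev, hIIR i]
      ring
end

section
/- Let (d_1, ..., d_n) be a non-decreasing sequence of non-negative real numbers satisfying condition I (for every subset J of {1,...,n}, Σ_{i∈J} d_i ≥ binom(|J|,2), with equality when J = {1,...,n}) and condition II (d_i + d_{n+1-i} = n - 1 for all i). Then there exist, for each m ≥ 1, non-decreasing sequences (d_1^{(m)}, ..., d_n^{(m)}) of non-negative rational numbers satisfying conditions I and II such that d_i^{(m)} → d_i as m → ∞ for each i = 1, 2, ..., n. -/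
lemma strictMono_fin_val_le {k n : ℕ} {g : Fin k → Fin n} (hg : StrictMono g) (j : Fin k) :
    (j : ℕ) ≤ (g j : ℕ) := by
  suffices H : ∀ j (hj : j < k), j ≤ (g ⟨j, hj⟩ : ℕ) from H j.1 j.2
  intro j
  induction j with
  | zero => intro hj; exact Nat.zero_le _
  | succ i ih =>
    intro hj
    have hi : i < k := Nat.lt_of_succ_lt hj
    have h1 := ih hi
    have h2 : g ⟨i, hi⟩ < g ⟨i + 1, hj⟩ := hg (by simp [Fin.lt_def])
    rw [Fin.lt_def] at h2
    omega

lemma initseg_sum_le {n k : ℕ} (f : Fin n → ℝ) (hf : Monotone f) (J : Finset (Fin n))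
    (hk : J.card = k) (hkn : k ≤ n) :
    ∑ j : Fin k, f (Fin.castLE hkn j) ≤ ∑ i ∈ J, f i := by
  have hJ : J = Finset.univ.map (J.orderEmbOfFin hk).toEmbedding := by
    refine (Finset.eq_of_subset_of_card_le ?_ ?_).symm
    · intro x hx
      simp only [Finset.mem_map, Finset.mem_univ, true_and] at hx
      obtain ⟨j, rfl⟩ := hx
      exact J.orderEmbOfFin_mem hk j
    · simp [hk]
  rw [hJ, Finset.sum_map]
  refine Finset.sum_le_sum fun j _ => hf ?_
  rw [Fin.le_def]
  simpa using strictMono_fin_val_le (J.orderEmbOfFin hk).strictMono j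

set_option maxHeartbeats 1000000 in
/-- Any non-decreasing non-negative real sequence satisfying conditions I and II can be
approximated by non-decreasing non-negative rational sequences satisfying conditions
I and II. -/
theorem rational_approximation_condI_condII (n : ℕ) (d : Fin n → ℝ)
    (hmono : Monotone d) (hpos : ∀ i, 0 ≤ d i) (hI : CondI d) (hII : CondII d) :
    ∃ D : ℕ → Fin n → ℚ,
      (∀ m, Monotone (D m)) ∧ (∀ m i, 0 ≤ D m i) ∧
      (∀ m, CondI (fun i => (D m i : ℝ))) ∧
      (∀ m, CondII (fun i => (D m i : ℝ))) ∧
      (∀ i, Filter.Tendsto (fun m => (D m i : ℝ)) Filter.atTop (nhds (d i))) := by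
  rcases Nat.lt_or_ge n 2 with hn | hn
  · -- degenerate cases n = 0 or n = 1 : the zero sequence works
    have hd0 : ∀ i : Fin n, d i = 0 := by
      intro i
      have hn1 : n = 1 := by have := i.isLt; omega
      have hrev : i.rev = i := by
        ext
        simp only [Fin.val_rev]
        omega
      have := hII i
      rw [hrev, hn1] at this
      push_cast at this
      linarith
    refine ⟨fun _ _ => 0, fun m => monotone_const, fun m i => le_refl 0, ?_, ?_, ?_⟩
    · intro m
      constructor
      · intro J
        have hJ2 : J.card < 2 := lt_of_le_of_lt (le_trans J.card_le_univ (by simp)) hn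
        simp [Nat.choose_eq_zero_of_lt hJ2]
      · have : n.choose 2 = 0 := Nat.choose_eq_zero_of_lt hn
        simp [this]
    · intro m i
      have hn1 : n = 1 := by have := i.isLt; omega
      subst hn1
      norm_num
    · intro i
      rw [hd0 i]
      simp only [Rat.cast_zero]
      exact tendsto_const_nhds
  -- main case: n ≥ 2
  · set ε : ℕ → ℚ := fun m => 1 / ((m + 1) * (4 * n ^ 2)) with hε_def
    set t : ℕ → ℚ := fun m => 1 / (m + 1) with ht_def
    have hn0 : (0:ℝ) < n := by positivity
    have hε_pos : ∀ m, (0:ℝ) < (ε m : ℝ) := by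
      intro m
      have : (0:ℚ) < ε m := by
        rw [hε_def]
        positivity
      exact_mod_cast this
    have ht_pos : ∀ m, (0:ℝ) < (t m : ℝ) := by
      intro m
      have : (0:ℚ) < t m := by rw [ht_def]; positivity
      exact_mod_cast this
    have ht_le : ∀ m, (t m : ℝ) ≤ 1 := by
      intro m
      have : t m ≤ 1 := by
        rw [ht_def]
        rw [div_le_one (by positivity)]
        push_cast
        linarith
      exact_mod_cast this
    have hkey : ∀ m, (n : ℝ) * (ε m : ℝ) ≤ (t m : ℝ) / 2 := by
      intro m
      have : (n : ℚ) * ε m ≤ t m / 2 := by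
        rw [hε_def, ht_def]
        simp only
        rw [mul_one_div, div_div, div_le_div_iff₀ (by positivity) (by positivity)]
        push_cast
        have h1 : (2:ℚ) ≤ n := by exact_mod_cast hn
        have h2 : (0:ℚ) ≤ m := by positivity
        nlinarith [mul_nonneg (show (0:ℚ) ≤ m + 1 by linarith)
          (show (0:ℚ) ≤ 4 * (n:ℚ)^2 - 2 * n by nlinarith)]
      exact_mod_cast this
    -- choose rational approximations q
    have key : ∀ m (i : Fin n), ∃ qq : ℚ,
        d i + (i : ℕ) * (ε m : ℝ) < (qq : ℝ) ∧ (qq : ℝ) < d i + ((i : ℕ) + 1) * (ε m : ℝ) := by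
      intro m i
      refine exists_rat_btwn ?_
      have := hε_pos m
      nlinarith
    choose q hq1 hq2 using key
    set e : ℕ → Fin n → ℚ := fun m i => (q m i + ((n : ℚ) - 1) - q m i.rev) / 2 with he_def
    set c : ℚ := ((n : ℚ) - 1) / 2 with hc_def
    set D : ℕ → Fin n → ℚ := fun m i => (1 - t m) * e m i + t m * c with hD_def
    -- basic bounds on q
    have hqd : ∀ m i, d i ≤ (q m i : ℝ) := by
      intro m i
      have h := hq1 m i
      have := hε_pos m
      nlinarith [Nat.cast_nonneg (α := ℝ) (i : ℕ)]
    have hqd2 : ∀ m (i : Fin n), (q m i : ℝ) ≤ d i + n * (ε m : ℝ) := by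
      intro m i
      have h := hq2 m i
      have h2 : ((i : ℕ) : ℝ) + 1 ≤ n := by
        have := i.isLt
        exact_mod_cast this
      have := hε_pos m
      nlinarith
    have hdub : ∀ i, d i ≤ (n : ℝ) - 1 := by
      intro i
      have := hII i
      have := hpos i.rev
      linarith
    -- e approximates d
    have hed : ∀ m i, |(e m i : ℝ) - d i| ≤ n * (ε m : ℝ) := by
      intro m i
      have h1 := hqd m i
      have h2 := hqd2 m i
      have h3 := hqd m i.rev
      have h4 := hqd2 m i.rev
      have h5 := hII i
      have h6 := hε_pos m
      rw [abs_le]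
      rw [he_def]
      push_cast
      constructor <;> nlinarith
    -- q is strictly monotone
    have hqm : ∀ m ⦃i j : Fin n⦄, i < j → q m i < q m j := by
      intro m i j hij
      rw [← Rat.cast_lt (K := ℝ)]
      have h2 := hq2 m i
      have h1 := hq1 m j
      have hdij := hmono hij.le
      have hij' : ((i : ℕ) : ℝ) + 1 ≤ ((j : ℕ) : ℝ) := by
        have : (i : ℕ) + 1 ≤ (j : ℕ) := hij
        exact_mod_cast this
      have hε := hε_pos m
      nlinarith
    -- e is monotone
    have hemono : ∀ m, Monotone (e m) := by
      intro m i j hij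
      rcases eq_or_lt_of_le hij with rfl | hlt
      · exact le_refl _
      · have h1 : q m i ≤ q m j := (hqm m hlt).le
        have h2 : q m j.rev ≤ q m i.rev := by
          rcases eq_or_lt_of_le (Fin.rev_le_rev.mpr hij) with heq | hlt2
          · rw [heq]
          · exact (hqm m hlt2).le
        rw [he_def]
        simp only
        linarith
    have hDmono : ∀ m, Monotone (D m) := by
      intro m i j hij
      rw [hD_def]
      simp only
      have h1 : (0:ℚ) ≤ 1 - t m := by
        have := ht_le m
        have : t m ≤ 1 := by exact_mod_cast this
        linarith
      have := hemono m hij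
      nlinarith
    -- condition II for D
    have hDII : ∀ m, CondII (fun i => (D m i : ℝ)) := by
      intro m i
      simp only [hD_def, he_def, hc_def, Fin.rev_rev]
      push_cast
      ring
    -- sum of e over univ
    have hrevsum : ∀ m, ∑ i : Fin n, q m i.rev = ∑ i : Fin n, q m i := by
      intro m
      exact Fintype.sum_equiv (Fin.revPerm) _ _ (fun i => by simp)
    have hesum : ∀ m, ∑ i, e m i = (n : ℚ) * ((n : ℚ) - 1) / 2 := by
      intro m
      rw [he_def]
      simp only
      rw [← Finset.sum_div, Finset.sum_sub_distrib, Finset.sum_add_distrib,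
        Finset.sum_const, hrevsum, Finset.card_univ, Fintype.card_fin, nsmul_eq_mul]
      ring
    have hDsum : ∀ m, ∑ i, D m i = (n : ℚ) * ((n : ℚ) - 1) / 2 := by
      intro m
      rw [hD_def]
      simp only
      rw [Finset.sum_add_distrib, ← Finset.mul_sum, hesum, Finset.sum_const,
        Finset.card_univ, Fintype.card_fin, nsmul_eq_mul, hc_def]
      ring
    have hchoose : ∀ k : ℕ, (k.choose 2 : ℝ) = (k : ℝ) * ((k : ℝ) - 1) / 2 :=
      fun k => Nat.cast_choose_two (K := ℝ) k
    -- nonnegativity of D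
    have hDpos : ∀ m i, 0 ≤ D m i := by
      intro m i
      rw [← Rat.cast_nonneg (K := ℝ)]
      have habs := hed m i
      rw [abs_le] at habs
      have h1 := hpos i
      have h2 := hkey m
      have h3 := ht_pos m
      have h4 := ht_le m
      have h5 := hε_pos m
      have hn2 : (2:ℝ) ≤ n := by exact_mod_cast hn
      have hcast : ((D m i : ℚ) : ℝ) =
          (1 - (t m : ℝ)) * (e m i : ℝ) + (t m : ℝ) * (((n:ℝ) - 1) / 2) := by
        rw [hD_def, hc_def]
        push_cast
        ring
      rw [hcast]
      nlinarith [mul_le_mul_of_nonneg_left habs.1 (show (0:ℝ) ≤ 1 - t m by linarith)]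
    -- condition I for D
    have hDI : ∀ m, CondI (fun i => (D m i : ℝ)) := by
      intro m
      have hsumR : ∑ i, ((D m i : ℚ) : ℝ) = (n.choose 2 : ℝ) := by
        rw [← Rat.cast_sum, hDsum, hchoose]
        push_cast
        ring
      constructor
      · intro J
        set k := J.card with hk
        have hkn : k ≤ n := by
          have := J.card_le_univ
          simpa using this
        rcases eq_or_lt_of_le hkn with heq | hlt
        · have hJu : J = Finset.univ := J.eq_univ_of_card (by simp [← hk, heq])
          rw [hJu]
          rw [hsumR]
          simp [heq]
        · -- k < n
          have hmonoD : Monotone (fun i => ((D m i : ℚ) : ℝ)) := fun i j hij =>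
            Rat.cast_le.mpr (hDmono m hij)
          have hstep := initseg_sum_le (fun i => ((D m i : ℚ) : ℝ)) hmonoD J rfl hkn
          refine le_trans ?_ hstep
          -- initial segment bound
          set Sd : ℝ := ∑ j : Fin k, d (Fin.castLE hkn j) with hSd_def
          set E : ℝ := ∑ j : Fin k, ((e m (Fin.castLE hkn j) : ℚ) : ℝ) with hE_def
          have hDdec : ∑ j : Fin k, ((D m (Fin.castLE hkn j) : ℚ) : ℝ)
              = (1 - (t m : ℝ)) * E + (t m : ℝ) * ((k : ℝ) * (((n:ℝ) - 1) / 2)) := by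
            have hterm : ∀ j : Fin k, ((D m (Fin.castLE hkn j) : ℚ) : ℝ)
                = (1 - (t m : ℝ)) * ((e m (Fin.castLE hkn j) : ℚ) : ℝ)
                  + (t m : ℝ) * (((n:ℝ) - 1) / 2) := by
              intro j
              rw [hD_def, hc_def]
              push_cast
              ring
            rw [Finset.sum_congr rfl (fun j _ => hterm j), Finset.sum_add_distrib,
              ← Finset.mul_sum, ← hE_def, Finset.sum_const, Finset.card_univ,
              Fintype.card_fin, nsmul_eq_mul]
            ring
          have hE_lb : Sd - (k:ℝ) * ((n:ℝ) * (ε m : ℝ)) ≤ E := by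
            have h : ∀ j : Fin k, d (Fin.castLE hkn j) - (n:ℝ) * (ε m:ℝ)
                ≤ ((e m (Fin.castLE hkn j) : ℚ) : ℝ) := by
              intro j
              have h := hed m (Fin.castLE hkn j)
              rw [abs_le] at h
              linarith [h.1]
            calc Sd - (k:ℝ) * ((n:ℝ) * (ε m:ℝ))
                = ∑ j : Fin k, (d (Fin.castLE hkn j) - (n:ℝ)*(ε m:ℝ)) := by
                  rw [Finset.sum_sub_distrib, Finset.sum_const, Finset.card_univ,
                    Fintype.card_fin, nsmul_eq_mul, hSd_def]
              _ ≤ E := Finset.sum_le_sum (fun j _ => h j)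
          have hSd_lb : ((k.choose 2 : ℕ) : ℝ) ≤ Sd := by
            have hJk : ((Finset.univ.map (Fin.castLEOrderEmb hkn).toEmbedding)
                : Finset (Fin n)).card = k := by simp
            have h := hI.1 (Finset.univ.map (Fin.castLEOrderEmb hkn).toEmbedding)
            rw [hJk, Finset.sum_map] at h
            exact h
          rw [hDdec, hchoose]
          rw [hchoose] at hSd_lb
          have hk1 : (k:ℝ) + 1 ≤ n := by exact_mod_cast hlt
          have hk0 : (0:ℝ) ≤ k := Nat.cast_nonneg k
          have h2 := hkey m
          have h3 := ht_pos m
          have h4 := ht_le m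
          have h5 := hε_pos m
          have h1T : (0:ℝ) ≤ 1 - (t m:ℝ) := by linarith
          have F1 := mul_le_mul_of_nonneg_left hE_lb h1T
          have F2 := mul_le_mul_of_nonneg_left hSd_lb h1T
          have F3 : (0:ℝ) ≤ ((t m:ℝ) * (k:ℝ)) * ((n:ℝ) - (k:ℝ) - 1) :=
            mul_nonneg (mul_nonneg h3.le hk0) (by linarith)
          have F4 := mul_le_mul_of_nonneg_left h2 hk0
          have F5 : (0:ℝ) ≤ (t m:ℝ) * ((k:ℝ) * ((n:ℝ) * (ε m:ℝ))) :=
            mul_nonneg h3.le (mul_nonneg hk0 (mul_nonneg hn0.le h5.le))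
          linarith
      · exact hsumR
    refine ⟨D, hDmono, hDpos, hDI, hDII, ?_⟩
    intro i
    have hnne : (n:ℝ) ≠ 0 := ne_of_gt hn0
    have hboundTendsto : Filter.Tendsto (fun m : ℕ => (n:ℝ) * (ε m : ℝ) + (t m : ℝ) * n)
        Filter.atTop (nhds 0) := by
      have h1 : Filter.Tendsto (fun m : ℕ => (1:ℝ)/(m+1)) Filter.atTop (nhds 0) :=
        tendsto_one_div_add_atTop_nhds_zero_nat
      have h2 : (fun m : ℕ => (n:ℝ) * (ε m : ℝ) + (t m : ℝ) * n)
          = fun m : ℕ => ((n:ℝ)/(4*(n:ℝ)^2) + n) * ((1:ℝ)/(m+1)) := by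
        funext m
        have hmne : ((m:ℝ)+1) ≠ 0 := by positivity
        rw [hε_def, ht_def]
        push_cast
        field_simp
      rw [h2]
      simpa using h1.const_mul ((n:ℝ)/(4*(n:ℝ)^2) + (n:ℝ))
    rw [← tendsto_sub_nhds_zero_iff]
    refine squeeze_zero_norm (fun m => ?_) hboundTendsto
    rw [Real.norm_eq_abs, abs_le]
    have habs := hed m i
    rw [abs_le] at habs
    have h2 := hkey m
    have h3 := ht_pos m
    have h4 := ht_le m
    have h5 := hε_pos m
    have h6 := hdub i
    have h7 := hpos i
    have hn2 : (2:ℝ) ≤ n := by exact_mod_cast hn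
    have hcast : ((D m i : ℚ):ℝ)
        = (1 - (t m:ℝ)) * ((e m i : ℚ):ℝ) + (t m:ℝ)*(((n:ℝ)-1)/2) := by
      rw [hD_def, hc_def]
      push_cast
      ring
    have h1T : (0:ℝ) ≤ 1 - (t m:ℝ) := by linarith
    have G2 : (0:ℝ) ≤ (t m:ℝ) * ((n:ℝ) * (ε m:ℝ)) :=
      mul_nonneg h3.le (mul_nonneg hn0.le h5.le)
    constructor
    · rw [hcast]
      have F := mul_le_mul_of_nonneg_left habs.1 h1T
      have G1 : (0:ℝ) ≤ (t m:ℝ) * ((n:ℝ) + ((n:ℝ)-1)/2 - d i) :=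
        mul_nonneg h3.le (by linarith)
      linarith
    · rw [hcast]
      have F := mul_le_mul_of_nonneg_left habs.2 h1T
      have G1 : (0:ℝ) ≤ (t m:ℝ) * ((n:ℝ) - ((n:ℝ)-1)/2 + d i) :=
        mul_nonneg h3.le (by linarith)
      linarith
end

section
/- A non-decreasing sequence (d_1, ..., d_n) of non-negative integers is the score sequence of some (non-generalised) tournament on n vertices if and only if it satisfies condition I: for every subset J of {1,...,n}, the sum of d_i over i in J is at least binom(|J|,2), with equality when J = {1,...,n}. -/
open Finset

lemma gauss_choose (m : ℕ) : ∑ i ∈ range m, i = m.choose 2 := by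
  induction m with
  | zero => simp
  | succ m ih =>
      rw [Finset.sum_range_succ, ih, Nat.choose_succ_succ' (n := m) (k := 1)]
      simp [Nat.choose_one_right, Nat.add_comm]

lemma initseg (n : ℕ) (P : ℕ → Prop) [DecidablePred P]
    (hdc : ∀ i j, i ≤ j → j < n → P j → P i) :
    ∀ i < n, (P i ↔ i < ((range n).filter P).card) := by
  intro i hi
  constructor
  · intro hP
    have hsub : range (i + 1) ⊆ (range n).filter P := by
      intro j hj
      simp only [Finset.mem_range] at hj
      simp only [Finset.mem_filter, Finset.mem_range]
      exact ⟨by omega, hdc j i (by omega) hi hP⟩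
    have := Finset.card_le_card hsub
    simpa using this
  · intro hlt
    by_contra hP
    have hsub : (range n).filter P ⊆ range i := by
      intro j hj
      simp only [Finset.mem_filter, Finset.mem_range] at hj
      simp only [Finset.mem_range]
      by_contra h
      exact hP (hdc i j (by omega) hj.1 hj.2)
    have := Finset.card_le_card hsub
    simp only [Finset.card_range] at this
    omega


lemma core (n : ℕ) : ∀ d : ℕ → ℕ,
    (∀ i j, i ≤ j → j < n → d i ≤ d j) →
    (∀ k, k ≤ n → k.choose 2 ≤ ∑ i ∈ range k, d i) →
    (∑ i ∈ range n, d i = n.choose 2) →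
    ∃ R : ℕ → ℕ → Bool,
      (∀ i, R i i = false) ∧
      (∀ i j, i < n → j < n → i ≠ j → R j i = !R i j) ∧
      (∀ i, i < n → (((range n).filter (fun j => R i j = true)).card = d i)) := by
  induction n with
  | zero =>
      intro d _ _ _
      exact ⟨fun _ _ => false, fun i => rfl, fun i j hi => by omega, fun i hi => by omega⟩
  | succ n IH =>
      intro d hmono hpre htot
      set s := d n with hs
      set v := d s with hv
      set a := ((range n).filter (fun i => d i < v)).card with ha
      set q := ((range n).filter (fun i => d i = v)).card with hq
      set t := n - s with ht
      set c := n - a - q with hc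
      set r := t - c with hr
      -- basic facts
      have hsum_succ : ∑ i ∈ range (n+1), d i = (∑ i ∈ range n, d i) + d n :=
        Finset.sum_range_succ d n
      have hch : (n+1).choose 2 = n.choose 2 + n := by
        rw [Nat.choose_succ_succ' (n := n) (k := 1)]
        simp [Nat.choose_one_right, Nat.add_comm]
      have hsn : s ≤ n := by
        have h1 := hpre n (by omega)
        omega
      have hdle : ∀ i, i ≤ n → d i ≤ s := fun i hi => by
        rcases Nat.eq_or_lt_of_le hi with h | h
        · subst h; exact le_refl _
        · exact hmono i n hi (by omega)
      have F1 : ∀ i < n, (d i < v ↔ i < a) := by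
        apply initseg
        intro i j hij hj hPj
        exact lt_of_le_of_lt (hmono i j hij (by omega)) hPj
      have F2 : ∀ i < n, (d i ≤ v ↔ i < a + q) := by
        have key : ((range n).filter (fun i => d i ≤ v)).card = a + q := by
          have hun : (range n).filter (fun i => d i ≤ v)
              = ((range n).filter (fun i => d i < v)) ∪ ((range n).filter (fun i => d i = v)) := by
            ext x; simp only [Finset.mem_filter, Finset.mem_union, Finset.mem_range]
            omega
          have hdisj : Disjoint ((range n).filter (fun i => d i < v))
              ((range n).filter (fun i => d i = v)) := by
            rw [Finset.disjoint_left]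
            intro x hx hx'
            simp only [Finset.mem_filter] at hx hx'
            omega
          rw [hun, Finset.card_union_of_disjoint hdisj]
        rw [← key]
        apply initseg
        intro i j hij hj hPj
        exact le_trans (hmono i j hij (by omega)) hPj
      have haq : a + q ≤ n := by
        have h1 : ((range n).filter (fun i => d i < v)) ∪ ((range n).filter (fun i => d i = v)) ⊆ range n := by
          intro x hx
          simp only [Finset.mem_union, Finset.mem_filter] at hx
          rcases hx with h | h <;> exact h.1
        have h2 := Finset.card_le_card h1
        have hdisj : Disjoint ((range n).filter (fun i => d i < v))
            ((range n).filter (fun i => d i = v)) := by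
          rw [Finset.disjoint_left]
          intro x hx hx'
          simp only [Finset.mem_filter] at hx hx'
          omega
        rw [Finset.card_union_of_disjoint hdisj] at h2
        simpa using h2
      have has : a ≤ s := by
        rcases Nat.lt_or_ge s n with h | h
        · have := F1 s h
          omega
        · omega
      have hsaq : s ≤ a + q := by
        rcases Nat.lt_or_ge s n with h | h
        · have := F2 s h
          omega
        · -- s = n : every i < n has d i ≤ v
          have : ∀ i < n, i < a + q := fun i hi =>
            (F2 i hi).mp (by
              have : d i ≤ d s := hmono i s (by omega) (by omega)
              omega)
          rcases Nat.eq_zero_or_pos n with h0 | h0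
          · omega
          · have := this (n-1) (by omega); omega
      have hct : c ≤ t := by
        rcases Nat.lt_or_ge s n with h | h
        · have := F2 s h; omega
        · have : n ≤ a + q := by
            rcases Nat.eq_zero_or_pos n with h0 | h0
            · omega
            · have h1 : ∀ i < n, i < a + q := fun i hi =>
                (F2 i hi).mp (by
                  have : d i ≤ d s := hmono i s (by omega) (by omega)
                  omega)
              have := h1 (n-1) (by omega); omega
          omega
      have hrq : r ≤ q := by omega
      have harn : a + r ≤ n := by omega
      -- the decrement set
      set SB : ℕ → Bool := fun i => decide ((a ≤ i ∧ i < a + r) ∨ (a + q ≤ i ∧ i < n)) with hSB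
      have hSBspec : ∀ i, SB i = true ↔ ((a ≤ i ∧ i < a + r) ∨ (a + q ≤ i ∧ i < n)) := by
        intro i; rw [hSB]; simp
      have hv1 : 0 < r → 1 ≤ v := by
        intro hr0
        by_contra hv0
        have hv0 : v = 0 := by omega
        have hsn' : s < n := by omega
        have hzero : ∀ i, i ≤ s → d i = 0 := by
          intro i hi
          have := hmono i s hi (by omega)
          omega
        have hsum0 : ∑ i ∈ range (s+1), d i = 0 := by
          apply Finset.sum_eq_zero
          intro i hi
          simp only [Finset.mem_range] at hi
          exact hzero i (by omega)
        have := hpre (s+1) (by omega)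
        rw [hsum0] at this
        have hs1 : s + 1 < 2 := by
          by_contra h
          have := Nat.choose_pos (n := s+1) (k := 2) (by omega)
          omega
        have hs0 : s = 0 := by omega
        have hall0 : ∀ i ∈ range (n+1), d i = 0 := by
          intro i hi
          simp only [Finset.mem_range] at hi
          have := hdle i (by omega)
          omega
        have : ∑ i ∈ range (n+1), d i = 0 := Finset.sum_eq_zero hall0
        rw [htot] at this
        have hn1 : n + 1 < 2 := by
          by_contra h
          have := Nat.choose_pos (n := n+1) (k := 2) (by omega)
          omega
        omega
      have hdS : ∀ i, SB i = true → (1 ≤ d i ∧ v ≤ d i ∧ i < n) := by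
        intro i hi
        rw [hSBspec] at hi
        rcases hi with ⟨h1, h2⟩ | ⟨h1, h2⟩
        · have hin : i < n := by omega
          have hvi : v ≤ d i := by
            have := F1 i hin
            omega
          exact ⟨by have := hv1 (by omega); omega, hvi, hin⟩
        · have := F2 i h2
          constructor
          · omega
          · exact ⟨by omega, h2⟩
      set e : ℕ → ℕ := fun i => if SB i then d i - 1 else d i with he
      have he_le : ∀ i, e i ≤ d i := by
        intro i; rw [he]; dsimp only; split <;> omega
      have he_ge : ∀ i, d i - 1 ≤ e i := by
        intro i; rw [he]; dsimp only; split <;> omega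
      have he_notS : ∀ i, SB i = false → e i = d i := by
        intro i hi; rw [he]; simp [hi]
      have he_S : ∀ i, SB i = true → e i + 1 = d i := by
        intro i hi
        have := hdS i hi
        rw [he]; simp [hi]; omega
      -- split sums
      have hsplit : ∀ k, (∑ i ∈ range k, e i) + ((range k).filter (fun i => SB i = true)).card
          = ∑ i ∈ range k, d i := by
        intro k
        rw [← Finset.sum_filter_add_sum_filter_not (range k) (fun i => SB i = true) e,
            ← Finset.sum_filter_add_sum_filter_not (range k) (fun i => SB i = true) d]
        have h1 : ∑ i ∈ (range k).filter (fun i => SB i = true), e i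
            + ((range k).filter (fun i => SB i = true)).card
            = ∑ i ∈ (range k).filter (fun i => SB i = true), d i := by
          rw [Finset.card_eq_sum_ones, ← Finset.sum_add_distrib]
          apply Finset.sum_congr rfl
          intro i hi
          simp only [Finset.mem_filter] at hi
          exact he_S i hi.2
        have h2 : ∑ i ∈ (range k).filter (fun i => ¬ SB i = true), e i
            = ∑ i ∈ (range k).filter (fun i => ¬ SB i = true), d i := by
          apply Finset.sum_congr rfl
          intro i hi
          simp only [Finset.mem_filter, Bool.not_eq_true] at hi
          exact he_notS i hi.2
        omega
      -- card of S within range k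
      have hScard : ∀ k ≤ n, ((range k).filter (fun i => SB i = true)).card
          = (min k (a + r) - min k a) + (k - min k (a + q)) := by
        intro k hk
        have hun : (range k).filter (fun i => SB i = true)
            = (Finset.Ico (min k a) (min k (a+r))) ∪ (Finset.Ico (min k (a+q)) k) := by
          ext x
          simp only [Finset.mem_filter, Finset.mem_union, Finset.mem_range, Finset.mem_Ico,
            hSBspec]
          omega
        have hdisj : Disjoint (Finset.Ico (min k a) (min k (a+r))) (Finset.Ico (min k (a+q)) k) := by
          rw [Finset.disjoint_left]
          intro x hx hx'
          simp only [Finset.mem_Ico] at hx hx'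
          omega
        rw [hun, Finset.card_union_of_disjoint hdisj, Nat.card_Ico, Nat.card_Ico]
      have hSfull : ((range n).filter (fun i => SB i = true)).card = t := by
        rw [hScard n (le_refl n)]
        omega
      -- total for e
      have htot_e : ∑ i ∈ range n, e i = n.choose 2 := by
        have := hsplit n
        rw [hSfull] at this
        omega
      -- monotonicity of e
      have hmono_e : ∀ i j, i ≤ j → j < n → e i ≤ e j := by
        intro i j hij hj
        cases hSBj : SB j with
        | false =>
            rw [he_notS j hSBj]
            exact le_trans (he_le i) (hmono i j hij (by omega))
        | true =>
            have hdj := hdS j hSBj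
            cases hSBi : SB i with
            | true =>
                have hei := he_S i hSBi
                have hej := he_S j hSBj
                have := hmono i j hij (by omega)
                omega
            | false =>
                have hej : e j + 1 = d j := he_S j hSBj
                rw [he_notS i hSBi]
                have hi_n : i < n := by omega
                have hnotSi : ¬ ((a ≤ i ∧ i < a + r) ∨ (a + q ≤ i ∧ i < n)) := by
                  rw [← hSBspec i, hSBi]; simp
                have hspec := (hSBspec j).mp hSBj
                rcases hspec with ⟨h1, h2⟩ | ⟨h1, h2⟩
                · have hia : i < a := by omega
                  have hF := F1 i hi_n
                  have hvj : v ≤ d j := hdj.2.1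
                  omega
                · have hiaq : i < a + q := by omega
                  have hF := F2 i hi_n
                  have hvj : v < d j := by have := F2 j h2; omega
                  omega
      -- prefix conditions for e
      have hpre_e : ∀ k, k ≤ n → k.choose 2 ≤ ∑ i ∈ range k, e i := by
        intro k hk
        rcases le_or_gt k a with hka | hka
        · -- k ≤ a : no decremented indices below k
          have h0 : ((range k).filter (fun i => SB i = true)).card = 0 := by
            rw [hScard k hk]; omega
          have h1 := hsplit k
          have h2 := hpre k (by omega)
          omega
        rcases le_or_gt k v with hkv | hkv
        · -- a < k ≤ v : go up from a
          have hsplitIco : (∑ i ∈ range a, e i) + (∑ i ∈ Finset.Ico a k, e i)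
              = ∑ i ∈ range k, e i := by
            rw [Finset.range_eq_Ico, Finset.range_eq_Ico]
            exact Finset.sum_Ico_consecutive e (by omega) (by omega)
          have hsplitId : (∑ i ∈ range a, i) + (∑ i ∈ Finset.Ico a k, i)
              = ∑ i ∈ range k, i := by
            rw [Finset.range_eq_Ico, Finset.range_eq_Ico]
            exact Finset.sum_Ico_consecutive (fun i => i) (by omega) (by omega)
          have hea : ∑ i ∈ range a, e i = ∑ i ∈ range a, d i := by
            have h0 : ((range a).filter (fun i => SB i = true)).card = 0 := by
              rw [hScard a (by omega)]; omega
            have := hsplit a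
            omega
          have hlow : ∑ i ∈ Finset.Ico a k, i ≤ ∑ i ∈ Finset.Ico a k, e i := by
            apply Finset.sum_le_sum
            intro i hi
            simp only [Finset.mem_Ico] at hi
            have hi_n : i < n := by omega
            have hF := F1 i hi_n
            have hdi : v ≤ d i := by omega
            have := he_ge i
            omega
          have hga := gauss_choose a
          have hgk := gauss_choose k
          have hpa := hpre a (by omega)
          omega
        · -- v < k : go down from n
          have hsplitIco : (∑ i ∈ range k, e i) + (∑ i ∈ Finset.Ico k n, e i)
              = ∑ i ∈ range n, e i := by
            rw [Finset.range_eq_Ico, Finset.range_eq_Ico]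
            exact Finset.sum_Ico_consecutive e (by omega) (by omega)
          have hsplitId : (∑ i ∈ range k, i) + (∑ i ∈ Finset.Ico k n, i)
              = ∑ i ∈ range n, i := by
            rw [Finset.range_eq_Ico, Finset.range_eq_Ico]
            exact Finset.sum_Ico_consecutive (fun i => i) (by omega) (by omega)
          have hhigh : ∑ i ∈ Finset.Ico k n, e i ≤ ∑ i ∈ Finset.Ico k n, i := by
            apply Finset.sum_le_sum
            intro i hi
            simp only [Finset.mem_Ico] at hi
            have hle := he_le i
            rcases le_or_gt i s with his | his
            · have : d i ≤ d s := hmono i s his (by omega)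
              omega
            · have : d i ≤ s := hdle i (by omega)
              omega
          have hgk := gauss_choose k
          have hgn := gauss_choose n
          omega
      -- apply the induction hypothesis
      obtain ⟨R', hR'irr, hR'anti, hR'card⟩ := IH e hmono_e hpre_e htot_e
      set R : ℕ → ℕ → Bool := fun i j =>
        if i = n then (if j = n then false else !SB j)
        else if j = n then SB i
        else R' i j with hRset
      have hRapp : ∀ i j, R i j =
          if i = n then (if j = n then false else !SB j)
          else if j = n then SB i
          else R' i j := fun i j => rfl
      refine ⟨R, ?_, ?_, ?_⟩
      · intro i
        rw [hRapp]
        by_cases hi : i = n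
        · simp [hi]
        · simp [hi, hR'irr i]
      · intro i j hi hj hij
        rw [hRapp, hRapp]
        by_cases hin : i = n
        · have hjn : j ≠ n := by omega
          simp [hin, hjn]
        · by_cases hjn : j = n
          · simp [hin, hjn]
          · simp only [if_neg hin, if_neg hjn]
            exact hR'anti i j (by omega) (by omega) hij
      · intro i hi
        by_cases hin : i = n
        · -- score of the new vertex
          rw [hin]
          have hset : (range (n+1)).filter (fun j => R n j = true)
              = (range n).filter (fun j => SB j = false) := by
            ext x
            simp only [Finset.mem_filter, Finset.mem_range, hRapp]
            by_cases hxn : x = n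
            · subst hxn; simp
            · simp only [eq_self_iff_true, if_true, if_neg hxn, Bool.not_eq_true']
              constructor
              · rintro ⟨h1, h2⟩; exact ⟨by omega, h2⟩
              · rintro ⟨h1, h2⟩; exact ⟨by omega, h2⟩
          rw [hset]
          have hcards := Finset.card_filter_add_card_filter_not
            (s := range n) (p := fun j => SB j = true)
          have hcongr2 : (range n).filter (fun j => ¬ SB j = true)
              = (range n).filter (fun j => SB j = false) := by
            apply Finset.filter_congr
            intro x _
            simp
          rw [hcongr2, hSfull] at hcards
          simp only [Finset.card_range] at hcards
          omega
        · -- score of an old vertex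
          have hi' : i < n := by omega
          cases hSBi : SB i with
          | true =>
              have hset : (range (n+1)).filter (fun j => R i j = true)
                  = insert n ((range n).filter (fun j => R' i j = true)) := by
                ext x
                simp only [Finset.mem_filter, Finset.mem_range, Finset.mem_insert, hRapp]
                by_cases hxn : x = n
                · subst hxn; simp [hin, hSBi]
                · simp only [if_neg hin, if_neg hxn]
                  constructor
                  · rintro ⟨h1, h2⟩; exact Or.inr ⟨by omega, h2⟩
                  · rintro (h | ⟨h1, h2⟩)
                    · exact absurd h hxn
                    · exact ⟨by omega, h2⟩
              rw [hset, Finset.card_insert_of_notMem (by simp), hR'card i hi']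
              exact he_S i hSBi
          | false =>
              have hset : (range (n+1)).filter (fun j => R i j = true)
                  = (range n).filter (fun j => R' i j = true) := by
                ext x
                simp only [Finset.mem_filter, Finset.mem_range, hRapp]
                by_cases hxn : x = n
                · subst hxn; simp [hin, hSBi]
                · simp only [if_neg hin, if_neg hxn]
                  constructor
                  · rintro ⟨h1, h2⟩; exact ⟨by omega, h2⟩
                  · rintro ⟨h1, h2⟩; exact ⟨by omega, h2⟩
              rw [hset, hR'card i hi']
              exact he_notS i hSBi


/-- A (non-generalised) tournament: a `{0,1}`-valued weight function with
`α u v + α v u = 1` for `u ≠ v` and `α v v = 0`. -/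
def IsTournament {V : Type*} (α : V → V → ℝ) : Prop :=
  (∀ u v, α u v = 0 ∨ α u v = 1) ∧ (∀ u v, u ≠ v → α u v + α v u = 1) ∧ (∀ v, α v v = 0)

lemma tournament_double_sum {n : ℕ} (α : Fin n → Fin n → ℝ) (hT : IsTournament α)
    (J : Finset (Fin n)) : ∑ i ∈ J, ∑ j ∈ J, α i j = (J.card.choose 2 : ℝ) := by
  obtain ⟨h01, hanti, hirr⟩ := hT
  have hrow : ∀ i ∈ J, ∑ j ∈ J, (α i j + α j i) = (J.card : ℝ) - 1 := by
    intro i hi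
    have h1 : ∑ j ∈ J, (α i j + α j i) = ∑ j ∈ J, (1 - if j = i then (1:ℝ) else 0) := by
      apply Finset.sum_congr rfl
      intro j hj
      by_cases hji : j = i
      · subst hji; simp [hirr j]
      · have := hanti i j (fun h => hji (h.symm))
        simp [hji]
        linarith
    rw [h1, Finset.sum_sub_distrib, Finset.sum_const, Finset.sum_ite_eq' J i (fun _ => (1:ℝ)),
      if_pos hi]
    simp
  have hdouble : (∑ i ∈ J, ∑ j ∈ J, α i j) + (∑ i ∈ J, ∑ j ∈ J, α i j)
      = (J.card : ℝ) * ((J.card : ℝ) - 1) := by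
    have hswap : ∑ i ∈ J, ∑ j ∈ J, α i j = ∑ i ∈ J, ∑ j ∈ J, α j i := Finset.sum_comm
    calc (∑ i ∈ J, ∑ j ∈ J, α i j) + (∑ i ∈ J, ∑ j ∈ J, α i j)
        = ∑ i ∈ J, (∑ j ∈ J, α i j + ∑ j ∈ J, α j i) := by
          nth_rewrite 2 [hswap]
          rw [← Finset.sum_add_distrib]
      _ = ∑ i ∈ J, ∑ j ∈ J, (α i j + α j i) := by
          apply Finset.sum_congr rfl
          intro i _
          rw [Finset.sum_add_distrib]
      _ = ∑ i ∈ J, ((J.card : ℝ) - 1) := Finset.sum_congr rfl hrow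
      _ = (J.card : ℝ) * ((J.card : ℝ) - 1) := by
          rw [Finset.sum_const]
          simp [mul_comm]
  have hc2 : (J.card.choose 2 : ℝ) = (J.card : ℝ) * ((J.card : ℝ) - 1) / 2 := by
    rw [Nat.cast_choose_two]
  rw [hc2]
  linarith

/-- Landau's theorem: a non-decreasing sequence of non-negative integers is the score
sequence of some tournament iff it satisfies condition I (subset sums are at least
`binom |J| 2`, with equality for the full set). -/
theorem landau (n : ℕ) (d : Fin n → ℕ) (hmono : Monotone d) :
    (∃ α : Fin n → Fin n → ℝ, IsTournament α ∧ ∀ i, ∑ j, α i j = (d i : ℝ)) ↔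
    ((∀ J : Finset (Fin n), J.card.choose 2 ≤ ∑ i ∈ J, d i) ∧
      ∑ i, d i = n.choose 2) := by
  constructor
  · rintro ⟨α, hT, hscore⟩
    obtain ⟨h01, hanti, hirr⟩ := hT
    have hnonneg : ∀ u v, 0 ≤ α u v := by
      intro u v
      rcases h01 u v with h | h <;> rw [h] <;> norm_num
    constructor
    · intro J
      have h1 : (∑ i ∈ J, (d i : ℝ)) = ∑ i ∈ J, ∑ j ∈ Finset.univ, α i j := by
        apply Finset.sum_congr rfl
        intro i _
        exact (hscore i).symm
      have h2 : ∑ i ∈ J, ∑ j ∈ J, α i j ≤ ∑ i ∈ J, ∑ j ∈ Finset.univ, α i j := by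
        apply Finset.sum_le_sum
        intro i _
        apply Finset.sum_le_sum_of_subset_of_nonneg (Finset.subset_univ J)
        intro j _ _
        exact hnonneg i j
      have h3 := tournament_double_sum α ⟨h01, hanti, hirr⟩ J
      have : (J.card.choose 2 : ℝ) ≤ ∑ i ∈ J, (d i : ℝ) := by
        rw [h1, ← h3]
        exact h2
      have hcast : ((J.card.choose 2 : ℕ) : ℝ) ≤ ((∑ i ∈ J, d i : ℕ) : ℝ) := by
        rw [Nat.cast_sum]
        exact this
      exact_mod_cast hcast
    · have h1 : (∑ i : Fin n, (d i : ℝ)) = ∑ i ∈ Finset.univ, ∑ j ∈ Finset.univ, α i j := by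
        apply Finset.sum_congr rfl
        intro i _
        exact (hscore i).symm
      have h3 := tournament_double_sum α ⟨h01, hanti, hirr⟩ Finset.univ
      rw [← h1] at h3
      have hcard : (Finset.univ : Finset (Fin n)).card = n := by
        rw [Finset.card_univ, Fintype.card_fin]
      rw [hcard] at h3
      have hcast : ((∑ i : Fin n, d i : ℕ) : ℝ) = ((n.choose 2 : ℕ) : ℝ) := by
        rw [Nat.cast_sum]
        exact h3
      exact_mod_cast hcast
  · rintro ⟨hsub, htot⟩
    set d' : ℕ → ℕ := fun i => if h : i < n then d ⟨i, h⟩ else 0 with hd'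
    have hd'app : ∀ i : Fin n, d' i.val = d i := by
      intro i
      rw [hd']
      simp only [i.isLt, dif_pos]
    have hm' : ∀ i j, i ≤ j → j < n → d' i ≤ d' j := by
      intro i j hij hj
      have hi : i < n := by omega
      rw [hd']
      simp only [dif_pos hi, dif_pos hj]
      exact hmono (show (⟨i, hi⟩ : Fin n) ≤ ⟨j, hj⟩ from hij)
    have hsum_trans : ∀ k, k ≤ n →
        ∑ i ∈ (Finset.univ.filter (fun i : Fin n => i.val < k)), d i
          = ∑ i ∈ range k, d' i := by
      intro k hk
      have e1 : ∑ i ∈ (Finset.univ.filter (fun i : Fin n => i.val < k)), d i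
          = ∑ i : Fin n, (if i.val < k then d' i.val else 0) := by
        rw [Finset.sum_filter]
        apply Finset.sum_congr rfl
        intro i _
        rw [hd'app]
      have e2 : ∑ i : Fin n, (if i.val < k then d' i.val else 0)
          = ∑ i ∈ range n, (if i < k then d' i else 0) :=
        Fin.sum_univ_eq_sum_range (fun m => if m < k then d' m else 0) n
      have e3 : ∑ i ∈ range k, (if i < k then d' i else 0)
          = ∑ i ∈ range n, (if i < k then d' i else 0) := by
        apply Finset.sum_subset
        · exact Finset.range_subset_range.mpr hk
        · intro x _ hx
          simp only [Finset.mem_range] at hx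
          rw [if_neg hx]
      have e4 : ∑ i ∈ range k, (if i < k then d' i else 0) = ∑ i ∈ range k, d' i := by
        apply Finset.sum_congr rfl
        intro i hi
        simp only [Finset.mem_range] at hi
        rw [if_pos hi]
      rw [e1, e2, ← e3, e4]
    have hcard_trans : ∀ k, k ≤ n →
        (Finset.univ.filter (fun i : Fin n => i.val < k)).card = k := by
      intro k hk
      rw [Finset.card_filter]
      have e2 : ∑ i : Fin n, (if i.val < k then 1 else 0)
          = ∑ i ∈ range n, (if i < k then 1 else 0) :=
        Fin.sum_univ_eq_sum_range (fun m => if m < k then 1 else 0) n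
      rw [e2]
      have e3 : ∑ i ∈ range k, (if i < k then (1:ℕ) else 0)
          = ∑ i ∈ range n, (if i < k then 1 else 0) := by
        apply Finset.sum_subset
        · exact Finset.range_subset_range.mpr hk
        · intro x _ hx
          simp only [Finset.mem_range] at hx
          rw [if_neg hx]
      rw [← e3]
      have e4 : ∑ i ∈ range k, (if i < k then (1:ℕ) else 0) = ∑ i ∈ range k, 1 := by
        apply Finset.sum_congr rfl
        intro i hi
        simp only [Finset.mem_range] at hi
        rw [if_pos hi]
      rw [e4]
      simp
    have hpre' : ∀ k, k ≤ n → k.choose 2 ≤ ∑ i ∈ range k, d' i := by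
      intro k hk
      have := hsub (Finset.univ.filter (fun i : Fin n => i.val < k))
      rw [hcard_trans k hk, hsum_trans k hk] at this
      exact this
    have htot' : ∑ i ∈ range n, d' i = n.choose 2 := by
      have := hsub (Finset.univ.filter (fun i : Fin n => i.val < n))
      have e0 : (Finset.univ.filter (fun i : Fin n => i.val < n)) = Finset.univ := by
        apply Finset.filter_true_of_mem
        intro i _
        exact i.isLt
      rw [← hsum_trans n (le_refl n), e0, htot]
    obtain ⟨R, hRirr, hRanti, hRcard⟩ := core n d' hm' hpre' htot'
    refine ⟨fun i j => if R i.val j.val then (1:ℝ) else 0, ⟨?_, ?_, ?_⟩, ?_⟩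
    · intro u v
      by_cases h : R u.val v.val
      · simp [h]
      · simp [h]
    · intro u v huv
      have hne : u.val ≠ v.val := fun h => huv (Fin.val_injective h)
      have hvu := hRanti u.val v.val u.isLt v.isLt hne
      show (if R u.val v.val then (1:ℝ) else 0) + (if R v.val u.val then (1:ℝ) else 0) = 1
      cases h : R u.val v.val
      · rw [h] at hvu
        simp only [Bool.not_false] at hvu
        simp [h, hvu]
      · rw [h] at hvu
        simp only [Bool.not_true] at hvu
        simp [h, hvu]
    · intro v
      simp [hRirr v.val]
    · intro i
      show (∑ j : Fin n, if R i.val j.val then (1:ℝ) else 0) = (d i : ℝ)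
      have e2 : ∑ j : Fin n, (if R i.val j.val then (1:ℝ) else 0)
          = ∑ j ∈ range n, (if R i.val j then (1:ℝ) else 0) :=
        Fin.sum_univ_eq_sum_range (fun m => if R i.val m then (1:ℝ) else 0) n
      rw [e2, ← Finset.sum_filter (p := fun j => R i.val j = true) (f := fun _ => (1:ℝ))]
      rw [Finset.sum_const, hRcard i.val i.isLt, hd'app i]
      simp
end

section
/- A non-decreasing sequence (d_1, ..., d_n) of non-negative real numbers is the score sequence of some generalised tournament on n vertices if and only if it satisfies condition I: for every subset J of {1,...,n}, the sum of d_i over i in J is at least binom(|J|,2), with equality when J = {1,...,n}. -/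
open Finset

private lemma sum_range_cast_real (m : ℕ) :
    ∑ i ∈ Finset.range m, (i : ℝ) = (m.choose 2 : ℝ) := by
  have h0 : ∑ i ∈ Finset.range m, (i : ℝ) = ((∑ i ∈ Finset.range m, i : ℕ) : ℝ) := by
    push_cast; rfl
  rw [h0]
  congr 1
  have h1 := Finset.sum_range_id_mul_two m
  have h2 := Nat.choose_two_right m
  omega

private lemma card_filter_lt_pairs {n : ℕ} (J : Finset (Fin n)) :
    (((J ×ˢ J).filter fun p => p.1 < p.2).card : ℕ) = J.card.choose 2 := by
  classical
  have hA : (J ×ˢ J).filter (fun p => p.1 < p.2) = J.offDiag.filter (fun p => p.1 < p.2) := by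
    ext p
    simp only [Finset.mem_filter, Finset.mem_product, Finset.mem_offDiag]
    constructor
    · rintro ⟨⟨h1, h2⟩, h3⟩; exact ⟨⟨h1, h2, ne_of_lt h3⟩, h3⟩
    · rintro ⟨⟨h1, h2, _⟩, h3⟩; exact ⟨⟨h1, h2⟩, h3⟩
  have hswap : (J.offDiag.filter fun p => ¬ p.1 < p.2).card
      = (J.offDiag.filter fun p => p.1 < p.2).card := by
    apply Finset.card_nbij' (i := Prod.swap) (j := Prod.swap)
    · rintro ⟨a, b⟩ hab
      simp only [Finset.mem_coe, Finset.mem_filter, Finset.mem_offDiag] at hab ⊢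
      obtain ⟨⟨h1, h2, h3⟩, h4⟩ := hab
      exact ⟨⟨h2, h1, h3.symm⟩, lt_of_le_of_ne (not_lt.mp h4) h3.symm⟩
    · rintro ⟨a, b⟩ hab
      simp only [Finset.mem_coe, Finset.mem_filter, Finset.mem_offDiag] at hab ⊢
      obtain ⟨⟨h1, h2, h3⟩, h4⟩ := hab
      exact ⟨⟨h2, h1, h3.symm⟩, not_lt.mpr (le_of_lt h4)⟩
    · intro a _; simp
    · intro a _; simp
  have hsplit := Finset.card_filter_add_card_filter_not
    (s := J.offDiag) (p := fun p => p.1 < p.2)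
  rw [hA]
  have hod := Finset.offDiag_card J
  have hmul : J.card * (J.card - 1) = J.card * J.card - J.card := by
    rw [Nat.mul_sub, Nat.mul_one]
  rw [Nat.choose_two_right, hmul]
  omega

private lemma pair_sum {n : ℕ} (J : Finset (Fin n)) (g : Fin n → Fin n → ℝ)
    (hdiag : ∀ i, g i i = 0) :
    ∑ i ∈ J, ∑ j ∈ J, g i j
      = ∑ p ∈ (J ×ˢ J).filter (fun p => p.1 < p.2), (g p.1 p.2 + g p.2 p.1) := by
  classical
  rw [← Finset.sum_product']
  rw [← Finset.sum_filter_add_sum_filter_not (J ×ˢ J) (fun p => p.1 < p.2)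
    (fun p => g p.1 p.2)]
  have hsplit2 : ∑ p ∈ (J ×ˢ J).filter (fun p => ¬ p.1 < p.2), g p.1 p.2
      = ∑ p ∈ (J ×ˢ J).filter (fun p => p.2 < p.1), g p.1 p.2 := by
    rw [← Finset.sum_filter_add_sum_filter_not
      ((J ×ˢ J).filter (fun p => ¬ p.1 < p.2)) (fun p => p.2 < p.1) (fun p => g p.1 p.2)]
    have he : ((J ×ˢ J).filter (fun p => ¬ p.1 < p.2)).filter (fun p => p.2 < p.1)
        = (J ×ˢ J).filter (fun p => p.2 < p.1) := by
      ext p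
      simp only [Finset.mem_filter]
      constructor
      · rintro ⟨⟨h1, _⟩, h2⟩; exact ⟨h1, h2⟩
      · rintro ⟨h1, h2⟩; exact ⟨⟨h1, asymm h2⟩, h2⟩
    have hz : ∑ p ∈ ((J ×ˢ J).filter (fun p => ¬ p.1 < p.2)).filter (fun p => ¬ p.2 < p.1),
        g p.1 p.2 = 0 := by
      apply Finset.sum_eq_zero
      intro p hp
      simp only [Finset.mem_filter] at hp
      have : p.1 = p.2 := le_antisymm (not_lt.mp hp.2) (not_lt.mp hp.1.2)
      rw [this]; exact hdiag p.2
    rw [he, hz, add_zero]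
  have hsw : ∑ p ∈ (J ×ˢ J).filter (fun p => p.2 < p.1), g p.1 p.2
      = ∑ p ∈ (J ×ˢ J).filter (fun p => p.1 < p.2), g p.2 p.1 := by
    apply Finset.sum_nbij' (i := Prod.swap) (j := Prod.swap)
    · rintro ⟨a, b⟩ hab
      simp only [Finset.mem_filter, Finset.mem_product] at hab ⊢
      exact ⟨⟨hab.1.2, hab.1.1⟩, hab.2⟩
    · rintro ⟨a, b⟩ hab
      simp only [Finset.mem_filter, Finset.mem_product] at hab ⊢
      exact ⟨⟨hab.1.2, hab.1.1⟩, hab.2⟩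
    · intro a _; simp
    · intro a _; simp
    · intro a _; rfl
  rw [hsplit2, hsw, ← Finset.sum_add_distrib]

private lemma abel_helper (a g : ℕ → ℝ) :
    ∀ n : ℕ, 0 < n → (∀ i, i + 1 < n → a i ≤ a (i + 1)) →
      (∀ m, m ≤ n → 0 ≤ ∑ i ∈ Finset.range m, g i) →
      ∑ i ∈ Finset.range n, a i * g i ≤ a (n - 1) * ∑ i ∈ Finset.range n, g i := by
  intro n
  induction n with
  | zero => intro h; exact absurd h (lt_irrefl 0)
  | succ m ih =>
    intro _ hmon hpre
    rcases Nat.eq_zero_or_pos m with hm | hm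
    · subst hm
      simp
    · rw [Finset.sum_range_succ, Finset.sum_range_succ (f := g)]
      have h1 := ih hm (fun i hi => hmon i (by omega)) (fun k hk => hpre k (by omega))
      have h2 : a (m - 1) ≤ a m := by
        have := hmon (m - 1) (by omega)
        rwa [Nat.sub_add_cancel hm] at this
      have h3 : 0 ≤ ∑ i ∈ Finset.range m, g i := hpre m (by omega)
      have h4 : a (m - 1) * ∑ i ∈ Finset.range m, g i ≤ a m * ∑ i ∈ Finset.range m, g i :=
        mul_le_mul_of_nonneg_right h2 h3
      have hms : m + 1 - 1 = m := by omega
      rw [hms, mul_add]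
      linarith

/-- Moon's theorem: a non-decreasing sequence of non-negative reals is the score sequence
of some generalised tournament iff it satisfies condition I. -/
theorem moon (n : ℕ) (d : Fin n → ℝ) (hmono : Monotone d) (hpos : ∀ i, 0 ≤ d i) :
    (∃ α : Fin n → Fin n → ℝ, IsGenTournament α ∧ ∀ i, ∑ j, α i j = d i) ↔ CondI d := by
  classical
  constructor
  · rintro ⟨α, ⟨h0, h1, hsum, hdiag⟩, hscore⟩
    have key : ∀ J : Finset (Fin n), ∑ i ∈ J, ∑ j ∈ J, α i j = (J.card.choose 2 : ℝ) := by
      intro J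
      rw [pair_sum J α hdiag]
      have hone : ∑ p ∈ (J ×ˢ J).filter (fun p => p.1 < p.2), (α p.1 p.2 + α p.2 p.1)
          = ∑ p ∈ (J ×ˢ J).filter (fun p => p.1 < p.2), (1 : ℝ) :=
        Finset.sum_congr rfl fun p hp =>
          hsum _ _ (ne_of_lt (Finset.mem_filter.mp hp).2)
      rw [hone, Finset.sum_const, nsmul_eq_mul, mul_one, card_filter_lt_pairs]
    constructor
    · intro J
      have hle : ∑ i ∈ J, ∑ j ∈ J, α i j ≤ ∑ i ∈ J, d i := by
        apply Finset.sum_le_sum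
        intro i _
        rw [← hscore i]
        exact Finset.sum_le_sum_of_subset_of_nonneg (Finset.subset_univ J)
          (fun j _ _ => h0 i j)
      rw [key J] at hle
      exact hle
    · have := key Finset.univ
      simp only [Finset.card_univ, Fintype.card_fin] at this
      rw [← this]
      apply Finset.sum_congr rfl
      intro i _
      rw [← hscore i]
  · intro hd
    by_contra hcon
    set S : Set (Fin n → ℝ) :=
      {e | ∃ α : Fin n → Fin n → ℝ, IsGenTournament α ∧ ∀ i, ∑ j, α i j = e i} with hSdef
    have hdS : d ∉ S := fun ⟨α, ha, hb⟩ => hcon ⟨α, ha, hb⟩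
    set T : Set (Fin n → Fin n → ℝ) := {β | IsGenTournament β} with hTdef
    set L : (Fin n → Fin n → ℝ) → (Fin n → ℝ) := fun β i => ∑ j, β i j with hLdef
    have hL : Continuous L :=
      continuous_pi fun i => continuous_finset_sum _ fun j _ =>
        (continuous_apply j).comp (continuous_apply i)
    have hST : S = L '' T := by
      ext e
      constructor
      · rintro ⟨β, hβ, hβe⟩; exact ⟨β, hβ, funext hβe⟩
      · rintro ⟨β, hβ, rfl⟩; exact ⟨β, hβ, fun i => rfl⟩
    have hev : ∀ i j : Fin n, Continuous fun β : Fin n → Fin n → ℝ => β i j :=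
      fun i j => (continuous_apply j).comp (continuous_apply i)
    have hTclosed : IsClosed T := by
      have c1 : IsClosed {β : Fin n → Fin n → ℝ | ∀ i j, 0 ≤ β i j} := by
        simp only [Set.setOf_forall]
        exact isClosed_iInter fun i => isClosed_iInter fun j =>
          isClosed_le continuous_const (hev i j)
      have c2 : IsClosed {β : Fin n → Fin n → ℝ | ∀ i j, β i j ≤ 1} := by
        simp only [Set.setOf_forall]
        exact isClosed_iInter fun i => isClosed_iInter fun j =>
          isClosed_le (hev i j) continuous_const
      have c3 : IsClosed {β : Fin n → Fin n → ℝ | ∀ i j, i ≠ j → β i j + β j i = 1} := by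
        simp only [Set.setOf_forall]
        exact isClosed_iInter fun i => isClosed_iInter fun j => isClosed_iInter fun _ =>
          isClosed_eq ((hev i j).add (hev j i)) continuous_const
      have c4 : IsClosed {β : Fin n → Fin n → ℝ | ∀ i, β i i = 0} := by
        simp only [Set.setOf_forall]
        exact isClosed_iInter fun i => isClosed_eq (hev i i) continuous_const
      have hTeq : T = {β : Fin n → Fin n → ℝ | ∀ i j, 0 ≤ β i j}
          ∩ ({β | ∀ i j, β i j ≤ 1}
          ∩ ({β | ∀ i j, i ≠ j → β i j + β j i = 1} ∩ {β | ∀ i, β i i = 0})) := by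
        ext β
        simp only [hTdef, Set.mem_setOf_eq, Set.mem_inter_iff, IsGenTournament]
      rw [hTeq]
      exact c1.inter (c2.inter (c3.inter c4))
    have hTsub : T ⊆ Set.pi Set.univ
        (fun _ : Fin n => Set.pi Set.univ fun _ : Fin n => Set.Icc (0:ℝ) 1) := by
      rintro β ⟨h0, h1, -, -⟩
      intro i _
      intro j _
      exact ⟨h0 i j, h1 i j⟩
    have hTcomp : IsCompact T :=
      (isCompact_univ_pi fun _ => isCompact_univ_pi fun _ =>
        isCompact_Icc).of_isClosed_subset hTclosed hTsub
    have hSclosed : IsClosed S := by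
      rw [hST]; exact (hTcomp.image hL).isClosed
    have hSconv : Convex ℝ S := by
      rintro x ⟨α, ⟨a0, a1, as, ad⟩, hx⟩ y ⟨β, ⟨b0, b1, bs, bd⟩, hy⟩ p q hp hq hpq
      refine ⟨fun i j => p * α i j + q * β i j, ⟨?_, ?_, ?_, ?_⟩, ?_⟩
      · intro i j
        show 0 ≤ p * α i j + q * β i j
        exact add_nonneg (mul_nonneg hp (a0 i j)) (mul_nonneg hq (b0 i j))
      · intro i j
        show p * α i j + q * β i j ≤ 1
        have := mul_le_mul_of_nonneg_left (a1 i j) hp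
        have := mul_le_mul_of_nonneg_left (b1 i j) hq
        linarith
      · intro i j hij
        show (p * α i j + q * β i j) + (p * α j i + q * β j i) = 1
        have h1 := as i j hij
        have h2 := bs i j hij
        calc (p * α i j + q * β i j) + (p * α j i + q * β j i)
            = p * (α i j + α j i) + q * (β i j + β j i) := by ring
          _ = p * 1 + q * 1 := by rw [h1, h2]
          _ = 1 := by linarith
      · intro i; simp [ad i, bd i]
      · intro i
        rw [Finset.sum_add_distrib, ← Finset.mul_sum, ← Finset.mul_sum, hx i, hy i]
        simp [smul_eq_mul]
    obtain ⟨f, u, hfS, hfd⟩ := geometric_hahn_banach_closed_point hSconv hSclosed hdS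
    set c : Fin n → ℝ := fun i => f (Pi.single i 1 : Fin n → ℝ) with hc
    have hfx : ∀ x : Fin n → ℝ, f x = ∑ i, c i * x i := by
      intro x
      have hx : x = ∑ i, (x i) • (Pi.single i 1 : Fin n → ℝ) := by
        funext k
        rw [Finset.sum_apply]
        simp [Pi.single_apply]
      conv_lhs => rw [hx]
      rw [map_sum]
      apply Finset.sum_congr rfl
      intro i _
      rw [f.map_smul]
      simp [hc, mul_comm]
    -- the comparison tournament
    set key : Fin n → Lex (ℝ × Fin n) := fun i => toLex (c i, i) with hkey
    have keyinj : Function.Injective key := by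
      intro i j h
      have := congrArg (fun p => (ofLex p).2) h
      simpa [hkey] using this
    set σ : Equiv.Perm (Fin n) := Tuple.sort key with hσ
    have hmonoσ : Monotone (key ∘ σ) := Tuple.monotone_sort key
    have hsm : StrictMono (key ∘ σ) :=
      hmonoσ.strictMono_of_injective (keyinj.comp σ.injective)
    have hcσ : Monotone (fun k : Fin n => c (σ k)) := by
      intro k l hkl
      have h := hmonoσ hkl
      rcases (Prod.Lex.le_iff (x := toLex (c (σ k), σ k)) (y := toLex (c (σ l), σ l))).1 h with h' | h'
      · exact le_of_lt h'
      · exact le_of_eq h'.1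
    set τ : Fin n → Fin n → ℝ := fun i j => if key j < key i then 1 else 0 with hτ
    have hτT : IsGenTournament τ := by
      refine ⟨fun i j => ?_, fun i j => ?_, fun i j hij => ?_, fun i => ?_⟩
      · show (0:ℝ) ≤ if key j < key i then 1 else 0
        split <;> norm_num
      · show (if key j < key i then (1:ℝ) else 0) ≤ 1
        split <;> norm_num
      · show ((if key j < key i then (1:ℝ) else 0) + if key i < key j then 1 else 0) = 1
        rcases lt_trichotomy (key i) (key j) with h | h | h
        · rw [if_neg (asymm h), if_pos h]; norm_num
        · exact absurd (keyinj h) hij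
        · rw [if_pos h, if_neg (asymm h)]; norm_num
      · show (if key i < key i then (1:ℝ) else 0) = 0
        simp
    set e₀ : Fin n → ℝ := fun i => ∑ j, τ i j with he₀
    have he₀S : e₀ ∈ S := ⟨τ, hτT, fun i => rfl⟩
    have hscore : ∀ k : Fin n, e₀ (σ k) = ((k : ℕ) : ℝ) := by
      intro k
      show (∑ j, if key j < key (σ k) then (1:ℝ) else 0) = ((k:ℕ) : ℝ)
      rw [Finset.sum_boole]
      have hcard : (Finset.univ.filter fun j => key j < key (σ k)).card
          = (Finset.univ.filter fun m => key (σ m) < key (σ k)).card := by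
        apply (Finset.card_equiv σ ?_).symm
        intro m
        simp
      have hcard2 : (Finset.univ.filter fun m => key (σ m) < key (σ k)).card = (k : ℕ) := by
        have : (Finset.univ.filter fun m => key (σ m) < key (σ k))
            = Finset.univ.filter fun m => m < k := by
          apply Finset.filter_congr
          intro m _
          exact hsm.lt_iff_lt
        rw [this]
        have : (Finset.univ.filter fun m : Fin n => m < k) = Finset.Iio k := by
          ext m; simp
        rw [this, Fin.card_Iio]
      rw [hcard, hcard2]
    -- the Abel summation inequality
    have habel : ∑ i, c i * d i ≤ ∑ i, c i * e₀ i := by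
      have h1 : ∑ i, c i * d i = ∑ k, c (σ k) * d (σ k) :=
        (Equiv.sum_comp σ (fun i => c i * d i)).symm
      have h2 : ∑ i, c i * e₀ i = ∑ k, c (σ k) * ((k : ℕ) : ℝ) := by
        rw [← Equiv.sum_comp σ (fun i => c i * e₀ i)]
        exact Finset.sum_congr rfl fun k _ => by rw [hscore k]
      rw [h1, h2]
      rcases Nat.eq_zero_or_pos n with hn | hn
      · subst hn; simp
      set A : ℕ → ℝ := fun m => if h : m < n then c (σ ⟨m, h⟩) else 0 with hA
      set G : ℕ → ℝ := fun m => if h : m < n then d (σ ⟨m, h⟩) - m else 0 with hG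
      have hsum1 : ∑ k : Fin n, c (σ k) * d (σ k) - ∑ k : Fin n, c (σ k) * ((k:ℕ) : ℝ)
          = ∑ i ∈ Finset.range n, A i * G i := by
        rw [← Fin.sum_univ_eq_sum_range (fun i => A i * G i) n]
        rw [← Finset.sum_sub_distrib]
        apply Finset.sum_congr rfl
        intro k _
        have hk : (k : ℕ) < n := k.is_lt
        simp only [hA, hG, hk, dif_pos, Fin.eta]
        ring
      have hprefix : ∀ m, m ≤ n → 0 ≤ ∑ i ∈ Finset.range m, G i := by
        intro m hm
        have hJ : ∑ i ∈ Finset.range m, G i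
            = ∑ k : Fin m, (d (σ (Fin.castLE hm k)) - ((k:ℕ) : ℝ)) := by
          rw [← Fin.sum_univ_eq_sum_range (fun i => G i) m]
          apply Finset.sum_congr rfl
          intro k _
          have hk : (k : ℕ) < n := lt_of_lt_of_le k.is_lt hm
          simp only [hG, hk, dif_pos]
          rfl
        rw [hJ, Finset.sum_sub_distrib]
        have hinj : Function.Injective (fun k : Fin m => σ (Fin.castLE hm k)) :=
          σ.injective.comp (Fin.castLE_injective hm)
        have hsumim : ∑ i ∈ Finset.image (fun k : Fin m => σ (Fin.castLE hm k)) Finset.univ,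
            d i = ∑ k : Fin m, d (σ (Fin.castLE hm k)) :=
          Finset.sum_image (fun x _ y _ h => hinj h)
        have hcard : (Finset.image (fun k : Fin m => σ (Fin.castLE hm k)) Finset.univ).card
            = m := by
          rw [Finset.card_image_of_injective _ hinj, Finset.card_univ, Fintype.card_fin]
        have h1 := hd.1 (Finset.image (fun k : Fin m => σ (Fin.castLE hm k)) Finset.univ)
        rw [hcard, hsumim] at h1
        have h2 : ∑ k : Fin m, ((k:ℕ) : ℝ) = (m.choose 2 : ℝ) := by
          rw [Fin.sum_univ_eq_sum_range (fun i => (i : ℝ)) m]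
          exact sum_range_cast_real m
        linarith
      have htot : ∑ i ∈ Finset.range n, G i = 0 := by
        have hJ : ∑ i ∈ Finset.range n, G i
            = ∑ k : Fin n, (d (σ k) - ((k:ℕ) : ℝ)) := by
          rw [← Fin.sum_univ_eq_sum_range (fun i => G i) n]
          apply Finset.sum_congr rfl
          intro k _
          have hk : (k : ℕ) < n := k.is_lt
          simp only [hG, hk, dif_pos, Fin.eta]
        rw [hJ, Finset.sum_sub_distrib]
        rw [Equiv.sum_comp σ d]
        have h2 : ∑ k : Fin n, ((k:ℕ) : ℝ) = (n.choose 2 : ℝ) := by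
          rw [Fin.sum_univ_eq_sum_range (fun i => (i : ℝ)) n]
          exact sum_range_cast_real n
        rw [hd.2, h2, sub_self]
      have hAmono : ∀ i, i + 1 < n → A i ≤ A (i + 1) := by
        intro i hi
        have hi1 : i < n := by omega
        simp only [hA, hi, hi1, dif_pos]
        apply hcσ
        exact Fin.mk_le_mk.mpr (Nat.le_succ i)
      have := abel_helper A G n hn hAmono hprefix
      rw [htot, mul_zero] at this
      rw [← hsum1] at this
      linarith
    have h1 : f e₀ < u := hfS e₀ he₀S
    have h2 : u < f d := hfd
    rw [hfx d] at h2
    rw [hfx e₀] at h1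
    linarith
end

section
/- If a self-converse generalised tournament on n vertices has a non-decreasing score sequence (d_1, ..., d_n), then d_i + d_{n+1-i} = n - 1 for all i = 1, ..., n; that is, the score sequence satisfies condition II. -/
/-- The non-decreasing score sequence of a self-converse generalised tournament satisfies
condition II: `d i + d (n+1-i) = n - 1` (`Fin.rev` plays the role of `i ↦ n+1-i`). -/
theorem selfConverse_score_sequence_satisfies_condII (n : ℕ) (α : Fin n → Fin n → ℝ)
    (hα : IsGenTournament α) (hsc : IsSelfConverse α)
    (d : Fin n → ℝ) (hd : ∀ i, ∑ j, α i j = d i) (hmono : Monotone d) :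
    ∀ i : Fin n, d i + d i.rev = (n : ℝ) - 1 := by
  obtain ⟨_, _, _, hdiag⟩ := hα
  obtain ⟨ρ, hρ⟩ := hsc
  -- key: d i + d (ρ i) = n - 1
  have key : ∀ i, d i + d (ρ i) = (n : ℝ) - 1 := by
    intro i
    have h1 : ∑ j, α (ρ i) (ρ j) = d (ρ i) := by
      rw [← hd (ρ i)]
      exact Equiv.sum_comp ρ (fun k => α (ρ i) k)
    have h2 : ∑ j, (α i j + α (ρ i) (ρ j)) = (n : ℝ) - 1 := by
      have : ∀ j ∈ Finset.univ, α i j + α (ρ i) (ρ j) = if j = i then 0 else 1 := by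
        intro j _
        by_cases hj : j = i
        · simp [hj, hdiag]
        · rw [hρ i j (Ne.symm hj)]; simp [hj]
      rw [Finset.sum_congr rfl this]
      have h4 : (∑ x : Fin n, if x = i then (0:ℝ) else 1)
          = ∑ x : Fin n, ((1:ℝ) - if x = i then 1 else 0) := by
        apply Finset.sum_congr rfl; intro x _; split <;> ring
      rw [h4, Finset.sum_sub_distrib, Finset.sum_ite_eq' Finset.univ i (fun _ => (1:ℝ))]
      simp
    rw [Finset.sum_add_distrib, hd i, h1] at h2
    exact h2
  -- define g, monotone, and d = g ∘ (ρ.trans revPerm)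
  set g : Fin n → ℝ := fun j => (n : ℝ) - 1 - d j.rev with hg
  have hgmono : Monotone g := by
    intro a b hab
    have : b.rev ≤ a.rev := Fin.rev_le_rev.mpr hab
    have := hmono this
    simp [hg]
    linarith
  set τ : Equiv.Perm (Fin n) := ρ.trans Fin.revPerm with hτ
  have hcomp : g ∘ τ = d := by
    funext i
    have := key i
    simp [hg, hτ, Fin.rev_rev]
    linarith
  have huniq : g ∘ τ = g ∘ (1 : Equiv.Perm (Fin n)) :=
    Tuple.unique_monotone (hcomp ▸ hmono) (by simpa using hgmono)
  rw [hcomp] at huniq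
  intro i
  have : d i = g i := congrFun huniq i
  simp [hg] at this
  linarith
end

section
/- Let m be an odd positive integer and let (d_1, ..., d_n) be a non-decreasing sequence of non-negative real numbers satisfying condition I and such that m·d_i is an integer for each i. Define, for i = 1,...,n and ℓ = 1,...,m, the integers c_{i,ℓ} = m·d_i + (m-1)/2. Then the non-decreasing sequence of mn integers consisting of all the c_{i,ℓ} (ordered non-decreasingly) satisfies condition I: for every subset J of these mn indices, the sum of the corresponding entries is at least binom(|J|, 2), with equality when J is the full index set. -/
lemma fin_strictMono_le {k N : ℕ} (σ : Fin k → Fin N) (h : StrictMono σ) (i : Fin k) :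
    (i : ℕ) ≤ (σ i : ℕ) := by
  have key : ∀ t : ℕ, ∀ i : Fin k, (i : ℕ) = t → t ≤ (σ i : ℕ) := by
    intro t
    induction t with
    | zero => intro i _; exact Nat.zero_le _
    | succ t ih =>
      intro i hi
      have ht : t < k := by have := i.isLt; omega
      have h1 : σ ⟨t, ht⟩ < σ i := h (by simp [Fin.lt_def, hi])
      have h2 := ih ⟨t, ht⟩ rfl
      have h3 : (σ ⟨t, ht⟩ : ℕ) < (σ i : ℕ) := h1
      omega
  exact key _ i rfl

lemma sum_prefix_le {N : ℕ} (F : ℕ → ℝ) (hF : ∀ a b : ℕ, a ≤ b → b < N → F a ≤ F b)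
    (K : Finset (Fin N)) :
    ∑ j ∈ Finset.range K.card, F j ≤ ∑ j ∈ K, F (j : ℕ) := by
  set k := K.card with hk
  let σ := K.orderEmbOfFin hk.symm
  have hsum : ∑ j ∈ K, F (j : ℕ) = ∑ i : Fin k, F ((σ i : Fin N) : ℕ) := by
    refine (Finset.sum_bij (fun (i : Fin k) _ => σ i) ?_ ?_ ?_ ?_).symm
    · intro a _; exact K.orderEmbOfFin_mem hk.symm a
    · intro a _ b _ hab; exact σ.injective hab
    · intro b hb
      have : (b : Fin N) ∈ Set.range σ := by
        rw [Finset.range_orderEmbOfFin]; exact hb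
      obtain ⟨a, ha⟩ := this
      exact ⟨a, Finset.mem_univ a, ha⟩
    · intro a _; rfl
  rw [hsum, ← Fin.sum_univ_eq_sum_range F k]
  refine Finset.sum_le_sum fun i _ => ?_
  exact hF i (σ i) (fin_strictMono_le σ σ.strictMono i) (σ i).isLt

lemma sum_div_decomp (D : ℕ → ℝ) (m : ℕ) (hm : 0 < m) (k : ℕ) :
    ∑ j ∈ Finset.range k, D (j / m)
      = m * ∑ i ∈ Finset.range (k / m), D i + ((k % m : ℕ) : ℝ) * D (k / m) := by
  induction k with
  | zero => simp
  | succ k ih =>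
    have hkm := Nat.div_add_mod k m
    have hrm : k % m < m := Nat.mod_lt _ hm
    have hk1 : k + 1 = m * (k / m) + (k % m + 1) := by omega
    rw [Finset.sum_range_succ, ih]
    rcases Nat.lt_or_ge (k % m + 1) m with h | h
    · have h1 : (k+1) / m = k / m := by
        rw [hk1, Nat.mul_add_div hm, Nat.div_eq_of_lt h, Nat.add_zero]
      have h2 : (k+1) % m = k % m + 1 := by
        rw [hk1, Nat.mul_add_mod, Nat.mod_eq_of_lt h]
      rw [h1, h2]; push_cast; ring
    · have hr : k % m + 1 = m := by omega
      have h1 : (k+1) / m = k / m + 1 := by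
        rw [hk1, hr, Nat.mul_add_div hm, Nat.div_self hm]
      have h2 : (k+1) % m = 0 := by
        rw [hk1, hr, Nat.mul_add_mod, Nat.mod_self]
      rw [h1, h2, Finset.sum_range_succ]
      have hc : ((k % m : ℕ) : ℝ) = (m : ℝ) - 1 := by
        have : (k % m) = m - 1 := by omega
        rw [this]; push_cast [Nat.cast_sub hm]; ring
      rw [hc]; push_cast; ring

lemma key_ineq (n m : ℕ) (hm0 : 0 < m) (D : ℕ → ℝ)
    (hq : ∀ q ≤ n, ((q.choose 2 : ℕ) : ℝ) ≤ ∑ i ∈ Finset.range q, D i)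
    (k : ℕ) (hk : k ≤ n * m) :
    ((k.choose 2 : ℕ) : ℝ) ≤ ∑ j ∈ Finset.range k, ((m:ℝ) * D (j / m) + ((m:ℝ)-1)/2) := by
  have hsplit : ∑ j ∈ Finset.range k, ((m:ℝ) * D (j/m) + ((m:ℝ)-1)/2)
      = (m:ℝ) * (∑ j ∈ Finset.range k, D (j/m)) + (k:ℝ) * (((m:ℝ)-1)/2) := by
    rw [Finset.sum_add_distrib, ← Finset.mul_sum, Finset.sum_const, Finset.card_range]
    rw [nsmul_eq_mul]
  rw [hsplit, sum_div_decomp D m hm0 k]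
  set q := k / m with hqdef
  set r := k % m with hrdef
  have hqr : k = m * q + r := (Nat.div_add_mod k m).symm
  have hrm : r < m := Nat.mod_lt _ hm0
  have hqn : q ≤ n := by
    calc q = k / m := rfl
    _ ≤ (n * m) / m := Nat.div_le_div_right hk
    _ = n := Nat.mul_div_cancel n hm0
  have hS := hq q hqn
  have hkr : (k : ℝ) = (m:ℝ) * (q:ℝ) + (r:ℝ) := by exact_mod_cast congrArg Nat.cast hqr
  rw [Nat.cast_choose_two] at hS ⊢
  rcases Nat.eq_zero_or_pos r with h0 | hpos
  · rw [h0] at hkr ⊢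
    rw [hkr]
    push_cast
    nlinarith [mul_le_mul_of_nonneg_left hS (mul_self_nonneg (m:ℝ)),
      (by positivity : (0:ℝ) ≤ (m:ℝ)), (by positivity : (0:ℝ) ≤ (q:ℝ))]
  · have hq1n : q + 1 ≤ n := by
      by_contra hcon
      push_neg at hcon
      have h1 : m * n ≤ m * q := Nat.mul_le_mul_left m (by omega)
      have h2 : m * n = n * m := Nat.mul_comm m n
      omega
    have hS1 := hq (q+1) hq1n
    rw [Finset.sum_range_succ, Nat.cast_choose_two] at hS1
    have hr1 : (1:ℝ) ≤ (r:ℝ) := Nat.one_le_cast.mpr hpos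
    have hrm' : (r:ℝ) ≤ (m:ℝ) - 1 := by
      have : r + 1 ≤ m := hrm
      have := (Nat.cast_le (α := ℝ)).mpr this
      push_cast at this; linarith
    have hm1 : (1:ℝ) ≤ (m:ℝ) := by exact_mod_cast hm0
    push_cast at hS1
    rw [hkr]
    have e1 := mul_le_mul_of_nonneg_left hS1 (by nlinarith : (0:ℝ) ≤ (m:ℝ) * (r:ℝ))
    have e2 := mul_le_mul_of_nonneg_left hS (by nlinarith : (0:ℝ) ≤ (m:ℝ) * ((m:ℝ) - (r:ℝ)))
    have e3 : (0:ℝ) ≤ (r:ℝ) * ((m:ℝ) - (r:ℝ)) :=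
      mul_nonneg (by linarith) (by linarith)
    nlinarith [e1, e2, e3]




/-- The blown-up array `c (i,ℓ) = m·d i + (m-1)/2` (`mn` entries indexed by
`Fin n × Fin m`) satisfies condition I whenever `(d i)` does. -/
theorem blowup_satisfies_condI (n m : ℕ) (hm : Odd m) (hm0 : 0 < m)
    (d : Fin n → ℝ) (hmono : Monotone d) (hpos : ∀ i, 0 ≤ d i) (hI : CondI d)
    (hint : ∀ i, ∃ z : ℕ, (m : ℝ) * d i = (z : ℝ)) :
    (∀ J : Finset (Fin n × Fin m),
      (J.card.choose 2 : ℝ) ≤ ∑ p ∈ J, ((m : ℝ) * d p.1 + ((m : ℝ) - 1) / 2)) ∧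
    ∑ p : Fin n × Fin m, ((m : ℝ) * d p.1 + ((m : ℝ) - 1) / 2)
      = (((m * n).choose 2 : ℕ) : ℝ) := by
  -- the extension of d to ℕ
  set D : ℕ → ℝ := fun j => if h : j < n then d ⟨j, h⟩ else 0 with hD
  have hdiv : ∀ i ℓ : ℕ, ℓ < m → (i * m + ℓ) / m = i := by
    intro i ℓ hℓ
    rw [add_comm, Nat.add_mul_div_right _ _ hm0, Nat.div_eq_of_lt hℓ, Nat.zero_add]
  have hmod : ∀ i ℓ : ℕ, ℓ < m → (i * m + ℓ) % m = ℓ := by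
    intro i ℓ hℓ
    rw [mul_comm, Nat.mul_add_mod, Nat.mod_eq_of_lt hℓ]
  -- condition I transported to range sums of D
  have hq : ∀ q ≤ n, ((q.choose 2 : ℕ) : ℝ) ≤ ∑ i ∈ Finset.range q, D i := by
    intro q hqn
    have h1 := hI.1 (Finset.univ.map (Fin.castLEEmb hqn))
    rw [Finset.sum_map, Finset.card_map, Finset.card_univ, Fintype.card_fin] at h1
    have h2 : ∑ i ∈ Finset.range q, D i = ∑ i : Fin q, d (Fin.castLE hqn i) := by
      rw [← Fin.sum_univ_eq_sum_range D q]
      refine Finset.sum_congr rfl fun i _ => ?_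
      have hi : (i : ℕ) < n := lt_of_lt_of_le i.isLt hqn
      simp only [hD, dif_pos hi]
      rfl
    rw [h2]
    exact h1
  -- the embedding of Fin n × Fin m into Fin (n * m)
  have hEbound : ∀ p : Fin n × Fin m, (p.1 : ℕ) * m + (p.2 : ℕ) < n * m := by
    intro p
    calc (p.1 : ℕ) * m + (p.2 : ℕ) < (p.1 : ℕ) * m + m := Nat.add_lt_add_left p.2.isLt _
    _ = ((p.1 : ℕ) + 1) * m := by ring
    _ ≤ n * m := Nat.mul_le_mul_right m p.1.isLt
  set E : Fin n × Fin m → Fin (n * m) := fun p => ⟨(p.1 : ℕ) * m + (p.2 : ℕ), hEbound p⟩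
    with hE
  have hEinj : Function.Injective E := by
    intro p p' hpp
    have h0 : (p.1 : ℕ) * m + (p.2 : ℕ) = (p'.1 : ℕ) * m + (p'.2 : ℕ) :=
      congrArg Fin.val hpp
    have e1 : (p.1 : ℕ) = (p'.1 : ℕ) := by
      rw [← hdiv p.1 p.2 p.2.isLt, ← hdiv p'.1 p'.2 p'.2.isLt, h0]
    have e2 : (p.2 : ℕ) = (p'.2 : ℕ) := by
      rw [← hmod p.1 p.2 p.2.isLt, ← hmod p'.1 p'.2 p'.2.isLt, h0]
    exact Prod.ext (Fin.ext e1) (Fin.ext e2)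
  set F : ℕ → ℝ := fun j => (m : ℝ) * D (j / m) + ((m : ℝ) - 1) / 2 with hF
  have hFE : ∀ p : Fin n × Fin m, F ((E p : Fin (n * m)) : ℕ)
      = (m : ℝ) * d p.1 + ((m : ℝ) - 1) / 2 := by
    intro p
    simp only [hF, hE]
    rw [hdiv p.1 p.2 p.2.isLt]
    simp only [hD, dif_pos p.1.isLt]
  have hFmono : ∀ a b : ℕ, a ≤ b → b < n * m → F a ≤ F b := by
    intro a b hab hb
    have h1 : a / m ≤ b / m := Nat.div_le_div_right hab
    have h2 : b / m < n := (Nat.div_lt_iff_lt_mul hm0).mpr hb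
    have h3 : a / m < n := lt_of_le_of_lt h1 h2
    simp only [hF, hD, dif_pos h2, dif_pos h3]
    have h4 : d ⟨a / m, h3⟩ ≤ d ⟨b / m, h2⟩ := hmono h1
    have h5 : (0:ℝ) ≤ (m:ℝ) := by positivity
    nlinarith
  constructor
  · intro J
    set K : Finset (Fin (n * m)) := J.map ⟨E, hEinj⟩ with hK
    have hKcard : K.card = J.card := Finset.card_map _
    have hsum : ∑ p ∈ J, ((m : ℝ) * d p.1 + ((m : ℝ) - 1) / 2)
        = ∑ j ∈ K, F (j : ℕ) := by
      rw [hK, Finset.sum_map]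
      exact (Finset.sum_congr rfl fun p _ => (hFE p)).symm
    have hcard : J.card ≤ n * m := by
      have h := K.card_le_univ
      rw [hKcard] at h
      simpa using h
    have step1 := key_ineq n m hm0 D hq J.card hcard
    have step2 := sum_prefix_le F hFmono K
    rw [hKcard] at step2
    rw [hsum]
    calc ((J.card.choose 2 : ℕ) : ℝ)
        ≤ ∑ j ∈ Finset.range J.card, ((m:ℝ) * D (j / m) + ((m:ℝ)-1)/2) := step1
    _ = ∑ j ∈ Finset.range J.card, F j := rfl
    _ ≤ ∑ j ∈ K, F (j : ℕ) := step2
  · rw [Fintype.sum_prod_type]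
    have h1 : ∀ i : Fin n, ∑ _ℓ : Fin m, ((m : ℝ) * d i + ((m : ℝ) - 1) / 2)
        = (m : ℝ) * ((m : ℝ) * d i + ((m : ℝ) - 1) / 2) := by
      intro i
      rw [Finset.sum_const, Finset.card_univ, Fintype.card_fin, nsmul_eq_mul]
    rw [Finset.sum_congr rfl fun i _ => h1 i]
    have h2 : ∑ i : Fin n, (m : ℝ) * ((m : ℝ) * d i + ((m : ℝ) - 1) / 2)
        = (m : ℝ) * (m : ℝ) * (∑ i, d i) + (n : ℝ) * ((m : ℝ) * (((m : ℝ) - 1) / 2)) := by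
      simp only [mul_add]
      rw [Finset.sum_add_distrib, Finset.sum_const, Finset.card_univ, Fintype.card_fin,
        nsmul_eq_mul, ← Finset.mul_sum, ← mul_assoc]
      have h3 : ∑ i : Fin n, (m:ℝ) * d i = (m:ℝ) * ∑ i, d i := by rw [Finset.mul_sum]
      rw [h3]
      ring
    rw [h2, hI.2, Nat.cast_choose_two, Nat.cast_choose_two]
    push_cast
    ring
end

section
/- Let m be an odd positive integer and let (d_1, ..., d_n) be a non-decreasing sequence of non-negative real numbers satisfying condition I and such that m·d_i is an integer for each i. Then there exists a (non-generalised) tournament on mn vertices in which, for each i = 1,...,n, exactly m vertices have outdegree m·d_i + (m-1)/2. (Blow-up of a generalised tournament realising (d_i), replacing each vertex by a regular tournament on m vertices.) -/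
theorem landau_exists {V : Type*} [Fintype V] [DecidableEq V] (e : V → ℕ)
    (hsub : ∀ S : Finset V, S.card.choose 2 ≤ ∑ v ∈ S, e v)
    (htot : ∑ v, e v = (Fintype.card V).choose 2) :
    ∃ α : V → V → ℝ,
      ((∀ u v, α u v = 0 ∨ α u v = 1) ∧ (∀ u v, u ≠ v → α u v + α v u = 1) ∧
        (∀ v, α v v = 0)) ∧ ∀ v, ∑ u, α v u = (e v : ℝ) := by
  classical
  set ι := {p : Finset V // p.card = 2} with hι
  set slot : V → Finset (V × ℕ) := fun v => (Finset.range (e v)).image (Prod.mk v) with hslot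
  have hmkinj : ∀ v : V, Function.Injective (Prod.mk v : ℕ → V × ℕ) := by
    intro v a b h; simpa using h
  have hslotcard : ∀ v, (slot v).card = e v := by
    intro v
    rw [hslot]
    rw [Finset.card_image_of_injective _ (hmkinj v), Finset.card_range]
  have hslotfst : ∀ v x, x ∈ slot v → x.1 = v := by
    intro v x hx
    simp only [hslot, Finset.mem_image, Finset.mem_range] at hx
    obtain ⟨a, _, rfl⟩ := hx
    rfl
  have hslotmem : ∀ v j, j < e v → ((v, j) : V × ℕ) ∈ slot v := by
    intro v j hj
    simp only [hslot, Finset.mem_image, Finset.mem_range]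
    exact ⟨j, hj, rfl⟩
  set t : ι → Finset (V × ℕ) := fun p => p.1.biUnion slot with ht
  have hall : ∀ s : Finset ι, s.card ≤ (s.biUnion t).card := by
    intro s
    set B : Finset V := s.biUnion (fun p => p.1) with hB
    have h1 : s.biUnion t = B.biUnion slot := by
      ext x
      simp only [Finset.mem_biUnion, ht, hB]
      constructor
      · rintro ⟨p, hp, v, hv, hx⟩; exact ⟨v, ⟨p, hp, hv⟩, hx⟩
      · rintro ⟨v, ⟨p, hp, hv⟩, hx⟩; exact ⟨p, hp, v, hv, hx⟩
    have hdisj : ∀ x ∈ B, ∀ y ∈ B, x ≠ y → Disjoint (slot x) (slot y) := by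
      intro x _ y _ hxy
      rw [Finset.disjoint_left]
      intro a hax hay
      exact hxy ((hslotfst x a hax) ▸ (hslotfst y a hay) ▸ rfl)
    have h2 : (B.biUnion slot).card = ∑ v ∈ B, e v := by
      rw [Finset.card_biUnion hdisj]
      exact Finset.sum_congr rfl fun v _ => hslotcard v
    have h3 : s.card ≤ B.card.choose 2 := by
      rw [← Finset.card_powersetCard 2 B]
      apply Finset.card_le_card_of_injOn (fun p => p.1)
      · intro p hp
        simp only [Finset.mem_coe] at hp ⊢
        rw [Finset.mem_powersetCard]
        refine ⟨fun v hv => Finset.mem_biUnion.2 ⟨p, hp, hv⟩, p.2⟩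
      · intro p _ q _ h
        exact Subtype.ext h
    calc s.card ≤ B.card.choose 2 := h3
      _ ≤ ∑ v ∈ B, e v := hsub B
      _ = (B.biUnion slot).card := h2.symm
      _ = (s.biUnion t).card := by rw [h1]
  obtain ⟨f, hinj, hmem⟩ := (Finset.all_card_le_biUnion_card_iff_exists_injective t).1 hall
  have hmem' : ∀ p : ι, (f p).1 ∈ p.1 ∧ f p ∈ slot ((f p).1) := by
    intro p
    have := hmem p
    rw [ht] at this
    simp only [Finset.mem_biUnion] at this
    obtain ⟨v, hv, hx⟩ := this
    have := hslotfst v (f p) hx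
    subst this
    exact ⟨hv, hx⟩
  -- cardinal count of ι
  have hιcard : Fintype.card ι = (Fintype.card V).choose 2 := by
    rw [Fintype.card_subtype]
    have : (Finset.univ.filter fun s : Finset V => s.card = 2) =
        Finset.univ.powersetCard 2 := by
      ext s
      simp [Finset.mem_powersetCard, Finset.subset_univ]
    rw [this, Finset.card_powersetCard, Finset.card_univ]
  set T : Finset (V × ℕ) := Finset.univ.biUnion slot with hT
  have hTcard : T.card = (Fintype.card V).choose 2 := by
    rw [hT, Finset.card_biUnion (fun x _ y _ hxy => by
      show Disjoint (slot x) (slot y)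
      rw [Finset.disjoint_left]
      intro a hax hay
      exact hxy ((hslotfst x a hax) ▸ (hslotfst y a hay) ▸ rfl))]
    rw [← htot]
    exact Finset.sum_congr rfl fun v _ => hslotcard v
  have himg : Finset.image f Finset.univ = T := by
    apply Finset.eq_of_subset_of_card_le
    · intro x hx
      rw [Finset.mem_image] at hx
      obtain ⟨p, _, rfl⟩ := hx
      exact Finset.mem_biUnion.2 ⟨(f p).1, Finset.mem_univ _, (hmem' p).2⟩
    · rw [Finset.card_image_of_injective _ hinj, Finset.card_univ, hιcard, hTcard]
  have hfiber : ∀ v, (Finset.univ.filter (fun p : ι => (f p).1 = v)).card = e v := by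
    intro v
    have h1 : Finset.image f (Finset.univ.filter (fun p : ι => (f p).1 = v)) = slot v := by
      ext x
      simp only [Finset.mem_image, Finset.mem_filter, Finset.mem_univ, true_and]
      constructor
      · rintro ⟨p, hp, rfl⟩
        exact hp ▸ (hmem' p).2
      · intro hx
        have hxT : x ∈ T := Finset.mem_biUnion.2 ⟨v, Finset.mem_univ _, hx⟩
        rw [← himg, Finset.mem_image] at hxT
        obtain ⟨p, _, rfl⟩ := hxT
        exact ⟨p, hslotfst v _ hx, rfl⟩
    calc (Finset.univ.filter (fun p : ι => (f p).1 = v)).card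
        = (Finset.image f (Finset.univ.filter (fun p : ι => (f p).1 = v))).card :=
          (Finset.card_image_of_injective _ hinj).symm
      _ = (slot v).card := by rw [h1]
      _ = e v := hslotcard v
  -- define the tournament
  refine ⟨fun u v => if h : u = v then 0 else
      if (f ⟨{u, v}, Finset.card_pair h⟩).1 = u then 1 else 0, ⟨?_, ?_, ?_⟩, ?_⟩
  · intro u v
    dsimp only
    by_cases h : u = v
    · left; simp [h]
    · rw [dif_neg h]
      split_ifs <;> simp
  · intro u v huv
    dsimp only
    rw [dif_neg huv, dif_neg (Ne.symm huv)]
    have hpq : (⟨{v, u}, Finset.card_pair (Ne.symm huv)⟩ : ι) =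
        ⟨{u, v}, Finset.card_pair huv⟩ := Subtype.ext (Finset.pair_comm v u)
    rw [hpq]
    have hmemp := (hmem' ⟨{u, v}, Finset.card_pair huv⟩).1
    simp only [Finset.mem_insert, Finset.mem_singleton] at hmemp
    rcases hmemp with h | h
    · have hne : (f ⟨{u, v}, Finset.card_pair huv⟩).1 ≠ v := fun h' => huv (h.symm.trans h')
      rw [if_pos h, if_neg hne]; norm_num
    · have hne : (f ⟨{u, v}, Finset.card_pair huv⟩).1 ≠ u := fun h' => huv (h'.symm.trans h)
      rw [if_neg hne, if_pos h]; norm_num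
  · intro v; simp
  · intro v
    dsimp only
    have hval : ∀ u : V, (if h : v = u then (0:ℝ) else
        if (f ⟨{v, u}, Finset.card_pair h⟩).1 = v then 1 else 0) =
        if (∃ h : v ≠ u, (f ⟨{v, u}, Finset.card_pair h⟩).1 = v) then 1 else 0 := by
      intro u
      by_cases h : v = u
      · rw [dif_pos h, if_neg]; rintro ⟨h', _⟩; exact h' h
      · rw [dif_neg h]
        by_cases h2 : (f ⟨{v, u}, Finset.card_pair h⟩).1 = v
        · rw [if_pos h2, if_pos ⟨h, h2⟩]
        · rw [if_neg h2, if_neg]; rintro ⟨h', hh⟩; exact h2 hh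
    rw [Finset.sum_congr rfl (fun u _ => hval u), Finset.sum_boole]
    have : (Finset.univ.filter (fun u => ∃ h : v ≠ u,
        (f ⟨{v, u}, Finset.card_pair h⟩).1 = v)).card =
        (Finset.univ.filter (fun p : ι => (f p).1 = v)).card := by
      apply Finset.card_bij (fun u hu => (⟨{v, u}, Finset.card_pair
        (by rw [Finset.mem_filter] at hu; exact hu.2.choose)⟩ : ι))
      · intro u hu
        rw [Finset.mem_filter] at hu ⊢
        exact ⟨Finset.mem_univ _, hu.2.choose_spec⟩
      · intro a ha b hb h
        rw [Finset.mem_filter] at ha hb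
        have h' : ({v, a} : Finset V) = {v, b} := congrArg Subtype.val h
        have : a ∈ ({v, b} : Finset V) := h' ▸ (by simp)
        simp only [Finset.mem_insert, Finset.mem_singleton] at this
        rcases this with h' | h'
        · exact absurd h'.symm ha.2.choose
        · exact h'
      · intro p hp
        rw [Finset.mem_filter] at hp
        obtain ⟨x, y, hxy, hxyp⟩ := Finset.card_eq_two.1 p.2
        have hvp : v ∈ p.1 := hp.2 ▸ (hmem' p).1
        rw [hxyp] at hvp
        simp only [Finset.mem_insert, Finset.mem_singleton] at hvp
        rcases hvp with rfl | rfl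
        · have hne : v ≠ y := hxy
          have hpeq : p = ⟨{v, y}, Finset.card_pair hne⟩ := Subtype.ext hxyp
          refine ⟨y, Finset.mem_filter.2 ⟨Finset.mem_univ _, hne, ?_⟩, hpeq.symm⟩
          rw [← hpeq]; exact hp.2
        · have hne : v ≠ x := Ne.symm hxy
          have hpeq : p = ⟨{v, x}, Finset.card_pair hne⟩ :=
            Subtype.ext (hxyp.trans (Finset.pair_comm x v))
          refine ⟨x, Finset.mem_filter.2 ⟨Finset.mem_univ _, hne, ?_⟩, hpeq.symm⟩
          rw [← hpeq]; exact hp.2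
    rw [this, hfiber]


/-- Blow-up: if `m` is odd, each `m·d i` is a non-negative integer and `(d i)` satisfies
condition I, then there is a tournament on the `mn` vertices `Fin n × Fin m` in which,
for each `i`, the `m` vertices `(i, ℓ)` have outdegree `m·d i + (m-1)/2`. -/
theorem exists_blowup_tournament (n m : ℕ) (hm : Odd m) (hm0 : 0 < m)
    (d : Fin n → ℝ) (hmono : Monotone d) (hpos : ∀ i, 0 ≤ d i) (hI : CondI d)
    (hint : ∀ i, ∃ z : ℕ, (m : ℝ) * d i = (z : ℝ)) :
    ∃ αH : Fin n × Fin m → Fin n × Fin m → ℝ, IsTournament αH ∧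
      ∀ (i : Fin n) (ℓ : Fin m),
        ∑ u : Fin n × Fin m, αH (i, ℓ) u = (m : ℝ) * d i + ((m : ℝ) - 1) / 2 := by
  obtain ⟨hI1, hI2⟩ := hI
  have hI : (∀ J : Finset (Fin n), (J.card.choose 2 : ℝ) ≤ ∑ i ∈ J, d i) ∧ ∑ i, d i = (n.choose 2 : ℝ) := ⟨hI1, hI2⟩
  classical
  obtain ⟨k, hk⟩ := hm
  have hmr : (m:ℝ) = 2 * (k:ℝ) + 1 := by exact_mod_cast hk
  choose c hc using hint
  set e : Fin n × Fin m → ℕ := fun p => c p.1 + k with he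
  have hck : ∀ i : Fin n, ((c i : ℝ) + (k:ℝ)) = (m:ℝ) * d i + ((m:ℝ) - 1)/2 := by
    intro i
    rw [← hc i, hmr]; ring
  have hdsum : ∑ i, d i = (n:ℝ) * ((n:ℝ) - 1) / 2 := by
    rw [hI.2, Nat.cast_choose_two]
  -- total sum
  have htot : ∑ p, e p = (Fintype.card (Fin n × Fin m)).choose 2 := by
    have key : ((∑ p, e p : ℕ) : ℝ) = (((Fintype.card (Fin n × Fin m)).choose 2 : ℕ) : ℝ) := by
      rw [Fintype.card_prod, Fintype.card_fin, Fintype.card_fin, Nat.cast_choose_two]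
      simp only [he]
      push_cast
      rw [Fintype.sum_prod_type]
      have e1 : ∀ i : Fin n, (∑ _ℓ : Fin m, ((c i:ℝ) + (k:ℝ)))
          = (m:ℝ)^2 * d i + (m:ℝ) * (((m:ℝ) - 1)/2) := by
        intro i
        rw [Finset.sum_const, Finset.card_univ, Fintype.card_fin, nsmul_eq_mul, hck i]
        ring
      rw [Finset.sum_congr rfl (fun i _ => e1 i), Finset.sum_add_distrib, ← Finset.mul_sum,
        Finset.sum_const, Finset.card_univ, Fintype.card_fin, nsmul_eq_mul, hdsum]
      push_cast
      ring
    exact Nat.cast_injective key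
  -- subset condition
  have hsub : ∀ S : Finset (Fin n × Fin m), S.card.choose 2 ≤ ∑ v ∈ S, e v := by
    intro S
    suffices h : ((S.card.choose 2 : ℕ) : ℝ) ≤ ((∑ v ∈ S, e v : ℕ) : ℝ) by exact_mod_cast h
    set a : Fin n → ℕ := fun i => (S.filter (fun p => p.1 = i)).card with ha
    have hK : S.card = ∑ i, a i :=
      Finset.card_eq_sum_card_fiberwise (fun p _ => Finset.mem_univ p.1)
    have ha_le : ∀ i, a i ≤ m := by
      intro i
      have : S.filter (fun p => p.1 = i) ⊆ ({i} : Finset (Fin n)) ×ˢ Finset.univ := by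
        intro p hp
        rw [Finset.mem_filter] at hp
        rw [Finset.mem_product]
        exact ⟨Finset.mem_singleton.2 hp.2, Finset.mem_univ _⟩
      calc a i ≤ (({i} : Finset (Fin n)) ×ˢ (Finset.univ : Finset (Fin m))).card :=
            Finset.card_le_card this
        _ = m := by
            rw [Finset.card_product, Finset.card_singleton, Finset.card_univ,
              Fintype.card_fin, one_mul]
    have hsumS : ((∑ v ∈ S, e v : ℕ) : ℝ) = ∑ i, (a i : ℝ) * ((c i : ℝ) + (k:ℝ)) := by
      simp only [he]
      push_cast
      rw [← Finset.sum_fiberwise_of_maps_to (fun p (_ : p ∈ S) => Finset.mem_univ p.1)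
        (fun p => ((c p.1 : ℝ) + (k:ℝ)))]
      apply Finset.sum_congr rfl
      intro i _
      have hcongr : ∑ p ∈ S.filter (fun p => p.1 = i), ((c p.1:ℝ) + (k:ℝ))
          = ∑ p ∈ S.filter (fun p => p.1 = i), ((c i:ℝ) + (k:ℝ)) := by
        apply Finset.sum_congr rfl
        intro p hp
        rw [Finset.mem_filter] at hp
        rw [hp.2]
      rw [hcongr, Finset.sum_const, nsmul_eq_mul]
    set b : ℕ → ℕ := fun t => (Finset.univ.filter (fun i => t < a i)).card with hb
    have hrange : ∀ i, (Finset.range m).filter (fun t => t < a i) = Finset.range (a i) := by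
      intro i
      ext t
      simp only [Finset.mem_filter, Finset.mem_range]
      constructor
      · rintro ⟨_, h2⟩; exact h2
      · intro h; exact ⟨lt_of_lt_of_le h (ha_le i), h⟩
    have hbK : ∑ t ∈ Finset.range m, b t = S.card := by
      rw [hK]
      simp only [hb, Finset.card_filter]
      rw [Finset.sum_comm]
      apply Finset.sum_congr rfl
      intro i _
      rw [← Finset.sum_filter, hrange i, Finset.sum_const, Finset.card_range, smul_eq_mul,
        mul_one]
    have hstep2 : ∑ t ∈ Finset.range m, (((b t).choose 2 : ℕ) : ℝ) ≤ ∑ i, (a i:ℝ) * d i := by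
      have expand : ∀ i : Fin n, (a i:ℝ) * d i
          = ∑ t ∈ Finset.range m, (if t < a i then d i else 0) := by
        intro i
        rw [← Finset.sum_filter, hrange i, Finset.sum_const, nsmul_eq_mul, Finset.card_range]
      rw [Finset.sum_congr rfl (fun i _ => expand i), Finset.sum_comm]
      apply Finset.sum_le_sum
      intro t _
      rw [← Finset.sum_filter]
      exact hI.1 _
    have hcs : ((S.card:ℝ))^2 ≤ (m:ℝ) * ∑ t ∈ Finset.range m, ((b t:ℝ))^2 := by
      have := sq_sum_le_card_mul_sum_sq (s := Finset.range m) (f := fun t => (b t : ℝ))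
      rw [Finset.card_range] at this
      have hcast : ∑ t ∈ Finset.range m, ((b t:ℝ)) = (S.card : ℝ) := by
        rw [← hbK]; push_cast; rfl
      rw [hcast] at this
      exact this
    have hchoose : ∑ t ∈ Finset.range m, (((b t).choose 2 : ℕ) : ℝ)
        = ((∑ t ∈ Finset.range m, ((b t:ℝ))^2) - (S.card:ℝ)) / 2 := by
      rw [Finset.sum_congr rfl (fun t _ => Nat.cast_choose_two ℝ (b t)), ← hbK]
      push_cast
      have : ∀ t : ℕ, (b t:ℝ)*((b t:ℝ)-1)/2 = ((b t:ℝ)^2 - (b t:ℝ))/2 := fun t => by ring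
      rw [Finset.sum_congr rfl (fun t _ => this t), ← Finset.sum_div, Finset.sum_sub_distrib]
    rw [hsumS, Nat.cast_choose_two]
    have hfinal : ∑ i, (a i:ℝ) * ((c i:ℝ) + (k:ℝ))
        = (m:ℝ) * (∑ i, (a i:ℝ) * d i) + (S.card:ℝ) * (k:ℝ) := by
      have : ∀ i : Fin n, (a i:ℝ) * ((c i:ℝ) + (k:ℝ))
          = (m:ℝ) * ((a i:ℝ) * d i) + (a i:ℝ) * (k:ℝ) := by
        intro i; rw [← hc i]; ring
      rw [Finset.sum_congr rfl (fun i _ => this i), Finset.sum_add_distrib, ← Finset.mul_sum,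
        ← Finset.sum_mul]
      congr 2
      rw [hK]; push_cast; rfl
    rw [hfinal]
    have hm0' : (0:ℝ) < (m:ℝ) := by exact_mod_cast hm0
    nlinarith [hstep2, hcs, hchoose, mul_le_mul_of_nonneg_left hstep2 (le_of_lt hm0')]
  obtain ⟨α, hT, hdeg⟩ := landau_exists e hsub htot
  refine ⟨α, hT, fun i ℓ => ?_⟩
  rw [hdeg (i, ℓ)]
  simp only [he]
  push_cast
  exact hck i
end
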